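/- arXiv:1304.0246 — 3 statements merged into one kernel-verified Lean document; each statement's English description precedes it below -/
import Mathlib

section
/- On the tree, for every integer L ≥ 2 and every x ∈ [0,1], the second moment of the number of open paths is E^x(Θ²) = Σ_{q=0}^{L−2} a(L,q)·(1−x)^{2L−q−2} + L·(1−x)^{L−1}. -/
open MeasureTheory Real Filter Topology ProbabilityTheory

noncomputable section

/-- The uniform probability measure on `[0,1]`. -/
def unif : Measure ℝ := volume.restrict (Set.Icc (0:ℝ) 1)

/-! ### The hypercube model -/

/-- Sample space for the hypercube model: an independent value for each vertex of `{0,1}^L`.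
(The values carried by the two corners `(0,…,0)` and `(1,…,1)` are never used: they are
overridden by `x` and `1` respectively in `hcPathVal`.) -/
abbrev HCOmega (L : ℕ) := (Fin L → Bool) → ℝ

/-- The product of uniform measures: all vertex values are i.i.d. uniform on `[0,1]`. -/
def hcMeasure (L : ℕ) : Measure (HCOmega L) := Measure.pi fun _ => unif

instance (L : ℕ) : IsProbabilityMeasure (hcMeasure L) := by
  have : IsProbabilityMeasure unif := by
    constructor
    simp [unif, Real.volume_Icc]
  exact MeasureTheory.Measure.pi.instIsProbabilityMeasure _

/-- The vertex reached after `i` steps along the directed path determined by the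
permutation `g` (at step `m` the coordinate `g m` is flipped from `0` to `1`):
coordinate `j` equals `1` iff `g.symm j < i`. -/
def hcVertex (L : ℕ) (g : Equiv.Perm (Fin L)) (i : ℕ) : Fin L → Bool :=
  fun j => decide ((g.symm j : ℕ) < i)

/-- The value seen after `i` steps along the path `g`: the starting corner carries `x`,
the final corner carries `1`, and every other vertex carries its random value. -/
def hcPathVal (L : ℕ) (x : ℝ) (ω : HCOmega L) (g : Equiv.Perm (Fin L)) (i : ℕ) : ℝ :=
  if i = 0 then x else if L ≤ i then 1 else ω (hcVertex L g i)

/-- A directed path is open when the `L+1` values along it are strictly increasing. -/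
def hcOpenPath (L : ℕ) (x : ℝ) (ω : HCOmega L) (g : Equiv.Perm (Fin L)) : Prop :=
  ∀ i < L, hcPathVal L x ω g i < hcPathVal L x ω g (i+1)

open Classical in
/-- `Θ`, the number of open directed paths on the hypercube. -/
def hcTheta (L : ℕ) (x : ℝ) (ω : HCOmega L) : ℕ :=
  (Finset.univ.filter fun g : Equiv.Perm (Fin L) => hcOpenPath L x ω g).card

/-- `E^x(Θ)` on the hypercube. -/
def hcE (L : ℕ) (x : ℝ) : ℝ := ∫ ω, (hcTheta L x ω : ℝ) ∂ hcMeasure L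

/-! ### The tree model -/

/-- Index type for the nodes of the tree: a node at level `k` is a sequence of `k`
elements of `{1,…,L}` (only duplicate-free sequences correspond to actual vertices;
the values attached to the other indices are unused dummies). -/
abbrev TreeNode (L : ℕ) := Σ k : Fin (L+1), (Fin (k : ℕ) → Fin L)

/-- Sample space for the tree model: an independent value for each node. -/
abbrev TreeOmega (L : ℕ) := TreeNode L → ℝ

/-- All node values are i.i.d. uniform on `[0,1]`. -/
def treeMeasure (L : ℕ) : Measure (TreeOmega L) := Measure.pi fun _ => unif

instance (L : ℕ) : IsProbabilityMeasure (treeMeasure L) := by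
  have : IsProbabilityMeasure unif := by
    constructor
    simp [unif, Real.volume_Icc]
  exact MeasureTheory.Measure.pi.instIsProbabilityMeasure _

/-- The value seen at level `k` along the root-to-leaf path determined by the
permutation `g` (whose level-`k` vertex is the prefix `(g 0, …, g (k-1))`):
the root carries `x`, the leaves carry `1`, the other vertices their random values. -/
def treePathVal (L : ℕ) (x : ℝ) (ω : TreeOmega L) (g : Equiv.Perm (Fin L)) (k : ℕ) : ℝ :=
  if h : k < L then
    if k = 0 then x
    else ω ⟨⟨k, Nat.lt_succ_of_lt h⟩, fun i => g ⟨(i : ℕ), lt_trans i.isLt h⟩⟩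
  else 1

/-- A root-to-leaf path is open when the `L+1` values along it are strictly increasing. -/
def treeOpenPath (L : ℕ) (x : ℝ) (ω : TreeOmega L) (g : Equiv.Perm (Fin L)) : Prop :=
  ∀ k < L, treePathVal L x ω g k < treePathVal L x ω g (k+1)

open Classical in
/-- `Θ`, the number of open root-to-leaf paths on the tree. -/
def treeTheta (L : ℕ) (x : ℝ) (ω : TreeOmega L) : ℕ :=
  (Finset.univ.filter fun g : Equiv.Perm (Fin L) => treeOpenPath L x ω g).card

/-- `E^x(Θ)` on the tree. -/
def treeE (L : ℕ) (x : ℝ) : ℝ := ∫ ω, (treeTheta L x ω : ℝ) ∂ treeMeasure L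


/-- The σ-algebra `F_k` on the tree: generated by the values carried by the (actual,
duplicate-free) vertices at levels `1` through `k`. -/
def treeF (L k : ℕ) : MeasurableSpace (TreeOmega L) :=
  MeasurableSpace.comap
    (fun ω (n : {n : TreeNode L // 1 ≤ (n.1 : ℕ) ∧ (n.1 : ℕ) ≤ k ∧ Function.Injective n.2}) =>
      ω n.1)
    inferInstance

/-- Number of coordinates equal to `1`, i.e. the Hamming distance from `(0,…,0)`. -/
def hcWeight {L : ℕ} (v : Fin L → Bool) : ℕ := (Finset.univ.filter fun j => v j = true).card

/-- The σ-algebra `F_k` on the hypercube: generated by the values carried by the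
(random) vertices at Hamming distance at most `k` from either corner. -/
def hcF (L k : ℕ) : MeasurableSpace (HCOmega L) :=
  MeasurableSpace.comap
    (fun ω (v : {v : Fin L → Bool // (v ≠ fun _ => false) ∧ (v ≠ fun _ => true) ∧
        (hcWeight v ≤ k ∨ L - k ≤ hcWeight v)}) => ω v.1)
    inferInstance

/-- The coefficients `a(L,q) = L!·(2L−2q−2)! / ((L−q−2)!·(2L−q−2)!)`. -/
def aCoef (L q : ℕ) : ℝ :=
  ((Nat.factorial L : ℝ) * (Nat.factorial (2*L - 2*q - 2) : ℝ)) /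
    ((Nat.factorial (L - q - 2) : ℝ) * (Nat.factorial (2*L - q - 2) : ℝ))

/-- `q₀(L) = ⌈ln(L²)/ln 2 + 1⌉`. -/
def q0 (L : ℕ) : ℕ := ⌈Real.log ((L:ℝ)^2) / Real.log 2 + 1⌉₊

/-- The sequence of functions `F_k`: `F_0(z) = e^{−z}` and
`F_k(z) = exp(−∫_0^z (1 − F_{k−1}(t))/t dt)`. (The value of the integrand at the single
point `t = 0` is irrelevant for the integral, so Lean's `x/0 = 0` convention agrees with
the continuous extension of the integrand.) -/
def Fseq : ℕ → ℝ → ℝ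
  | 0 => fun z => Real.exp (-z)
  | (k+1) => fun z => Real.exp (-(∫ t in (0:ℝ)..z, (1 - Fseq k t) / t))

/-- The standard exponential distribution, with density `e^{−t}` on `[0,∞)`. -/
def stdExp : Measure ℝ :=
  (volume.restrict (Set.Ici (0:ℝ))).withDensity fun t => ENNReal.ofReal (Real.exp (-t))



/-! ### Auxiliary development -/

section aux
open Set

instance unif_prob : IsProbabilityMeasure unif := by
  constructor; simp [unif, Real.volume_Icc]






/-- chain set: strictly increasing, all values in `(t,1)`. -/
def chainSet (m : ℕ) (t : ℝ) : Set (Fin m → ℝ) :=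
  {u | (∀ i j : Fin m, i < j → u i < u j) ∧ ∀ i, t < u i ∧ u i < 1}

def lastVal (x : ℝ) {q : ℕ} (u : Fin q → ℝ) : ℝ :=
  if h : 0 < q then u ⟨q - 1, by omega⟩ else x

lemma measurable_lastVal (x : ℝ) (q : ℕ) : Measurable (lastVal x (q := q)) := by
  unfold lastVal
  split
  · exact measurable_pi_apply _
  · exact measurable_const

lemma measurableSet_chainSet_comp {α : Type*} [MeasurableSpace α] {m : ℕ}
    {f : α → ℝ} (hf : Measurable f) {v : α → Fin m → ℝ} (hv : Measurable v) :
    MeasurableSet {a | v a ∈ chainSet m (f a)} := by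
  have h : {a | v a ∈ chainSet m (f a)} =
      (⋂ i, ⋂ j, {a | (i : Fin m) < j → v a i < v a j}) ∩
        ⋂ i, ({a | f a < v a i} ∩ {a | v a i < 1}) := by
    ext a
    simp only [chainSet, Set.mem_setOf_eq, Set.mem_inter_iff, Set.mem_iInter, forall_and]
  rw [h]
  have hvi : ∀ i : Fin m, Measurable fun a => v a i := fun i =>
    (measurable_pi_apply i).comp hv
  refine MeasurableSet.inter ?_ ?_
  · refine MeasurableSet.iInter fun i => MeasurableSet.iInter fun j => ?_
    by_cases hij : i < j
    · simp only [hij, true_implies]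
      exact measurableSet_lt (hvi i) (hvi j)
    · simp only [hij, false_implies, Set.setOf_true]
      exact MeasurableSet.univ
  · refine MeasurableSet.iInter fun i => MeasurableSet.inter ?_ ?_
    · exact measurableSet_lt hf (hvi i)
    · exact measurableSet_lt (hvi i) measurable_const

lemma measurableSet_chainSet (m : ℕ) (t : ℝ) : MeasurableSet (chainSet m t) :=
  measurableSet_chainSet_comp (f := fun _ => t) measurable_const measurable_id

def fullSet (q m : ℕ) (x : ℝ) : Set ((Fin q → ℝ) × (Fin m → ℝ) × (Fin m → ℝ)) :=
  {p | p.1 ∈ chainSet q x ∧ p.2.1 ∈ chainSet m (lastVal x p.1) ∧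
    p.2.2 ∈ chainSet m (lastVal x p.1)}

lemma measurableSet_fullSet (q m : ℕ) (x : ℝ) : MeasurableSet (fullSet q m x) := by
  have h1 : MeasurableSet {p : (Fin q → ℝ) × (Fin m → ℝ) × (Fin m → ℝ) | p.1 ∈ chainSet q x} :=
    measurableSet_chainSet_comp (f := fun _ => x) measurable_const measurable_fst
  have hl : Measurable fun p : (Fin q → ℝ) × (Fin m → ℝ) × (Fin m → ℝ) => lastVal x p.1 :=
    (measurable_lastVal x q).comp measurable_fst
  have h2 : MeasurableSet {p : (Fin q → ℝ) × (Fin m → ℝ) × (Fin m → ℝ) |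
      p.2.1 ∈ chainSet m (lastVal x p.1)} :=
    measurableSet_chainSet_comp hl (measurable_fst.comp measurable_snd)
  have h3 : MeasurableSet {p : (Fin q → ℝ) × (Fin m → ℝ) × (Fin m → ℝ) |
      p.2.2 ∈ chainSet m (lastVal x p.1)} :=
    measurableSet_chainSet_comp hl (measurable_snd.comp measurable_snd)
  exact (h1.inter (h2.inter h3))

lemma lastVal_cons (x y : ℝ) (q : ℕ) (v : Fin q → ℝ) :
    lastVal x (Fin.cons y v) = lastVal y v := by
  rcases Nat.eq_zero_or_pos q with h | h
  · subst h
    simp only [lastVal, Nat.lt_irrefl, dif_neg, Nat.zero_lt_one, dif_pos]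
    rfl
  · have h1 : (0:ℕ) < q + 1 := Nat.succ_pos q
    simp only [lastVal, dif_pos h1, dif_pos h]
    have : (⟨q + 1 - 1, by omega⟩ : Fin (q+1)) = Fin.succ ⟨q - 1, by omega⟩ := by
      apply Fin.ext; simp; omega
    rw [this, Fin.cons_succ]

lemma cons_mem_chainSet (q : ℕ) (x y : ℝ) (v : Fin q → ℝ) :
    Fin.cons y v ∈ chainSet (q+1) x ↔ y ∈ Set.Ioo x 1 ∧ v ∈ chainSet q y := by
  constructor
  · rintro ⟨h1, h2⟩
    have hy := h2 0
    refine ⟨⟨hy.1, hy.2⟩, fun i j hij => ?_, fun i => ⟨?_, ?_⟩⟩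
    · have := h1 i.succ j.succ (by simpa using hij)
      simpa using this
    · have := h1 0 i.succ (Fin.succ_pos i)
      simpa using this
    · have := (h2 i.succ).2
      simpa using this
  · rintro ⟨⟨hxy, hy1⟩, hmono, hb⟩
    refine ⟨fun i j hij => ?_, fun i => ?_⟩
    · induction i using Fin.cases with
      | zero =>
        induction j using Fin.cases with
        | zero => exact absurd hij (lt_irrefl _)
        | succ j' => simpa using (hb j').1
      | succ i' =>
        induction j using Fin.cases with
        | zero => exact absurd hij (by simp [Fin.lt_def])
        | succ j' =>
          have : i' < j' := by simpa using hij
          simpa using hmono i' j' this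
    · induction i using Fin.cases with
      | zero => exact ⟨by simpa using hxy, by simpa using hy1⟩
      | succ i' =>
        refine ⟨?_, by simpa using (hb i').2⟩
        have := (hb i').1
        simp only [Fin.cons_succ]
        exact lt_trans hxy this

lemma lintegral_Ioo_pow (t : ℝ) (ht0 : 0 ≤ t) (ht1 : t ≤ 1) (k : ℕ) (c : ℝ) (hc : 0 ≤ c) :
    ∫⁻ y in Set.Ioo t 1, ENNReal.ofReal (c * (1 - y)^k) ∂(volume : Measure ℝ)
      = ENNReal.ofReal (c * (1 - t)^(k+1) / (k+1)) := by
  have hcont : Continuous fun y : ℝ => c * (1 - y)^k := by continuity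
  rw [← ofReal_integral_eq_lintegral_ofReal]
  · congr 1
    rw [← MeasureTheory.integral_Ioc_eq_integral_Ioo, ← intervalIntegral.integral_of_le ht1]
    have h := intervalIntegral.integral_comp_sub_left (a := t) (b := 1)
      (fun u : ℝ => c * u ^ k) 1
    rw [h, intervalIntegral.integral_const_mul, integral_pow]
    have : (1:ℝ) - 1 = 0 := by ring
    rw [this]
    rw [zero_pow (Nat.succ_ne_zero k)]
    ring
  · exact (hcont.integrableOn_Icc).mono_set Set.Ioo_subset_Icc_self
  · refine (ae_restrict_iff' measurableSet_Ioo).2 (Filter.Eventually.of_forall fun y hy => ?_)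
    exact mul_nonneg hc (pow_nonneg (by linarith [hy.2]) k)

lemma chain_weight (k : ℕ) (c : ℝ) (hc : 0 ≤ c) :
    ∀ (q : ℕ) (x : ℝ), 0 ≤ x → x ≤ 1 →
    (∫⁻ u, Set.indicator (chainSet q x)
        (fun u => ENNReal.ofReal (c * (1 - lastVal x u)^k)) u
      ∂(Measure.pi fun _ : Fin q => unif))
      = ENNReal.ofReal (c * (1 - x)^(k+q) * k.factorial / (k+q).factorial) := by
  intro q
  induction q with
  | zero =>
    intro x hx0 hx1
    have h1 : chainSet 0 x = Set.univ := by
      ext u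
      simp [chainSet]
    rw [h1, Set.indicator_univ]
    have h2 : ∀ u : Fin 0 → ℝ, ENNReal.ofReal (c * (1 - lastVal x u)^k)
        = ENNReal.ofReal (c * (1 - x)^k) := by
      intro u; simp [lastVal]
    simp_rw [h2]
    rw [lintegral_const, measure_univ, mul_one]
    congr 1
    rw [Nat.add_zero]
    have hk : (k.factorial : ℝ) ≠ 0 := Nat.cast_ne_zero.2 k.factorial_ne_zero
    field_simp
  | succ q ih =>
    intro x hx0 hx1
    have hF : Measurable (Set.indicator (chainSet (q+1) x)
      (fun u => ENNReal.ofReal (c * (1 - lastVal x u)^k))) := by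
      refine Measurable.indicator ?_ (measurableSet_chainSet _ _)
      exact (((measurable_const.sub (measurable_lastVal x (q+1))).pow_const k).const_mul
        c).ennreal_ofReal
    let e := MeasurableEquiv.piFinSuccAbove (fun _ : Fin (q+1) => ℝ) 0
    have mp : MeasurePreserving e.symm
        (unif.prod (Measure.pi fun _ : Fin q => unif))
        (Measure.pi fun _ : Fin (q+1) => unif) :=
      (measurePreserving_piFinSuccAbove (fun _ : Fin (q+1) => unif) 0).symm _
    rw [← mp.map_eq, lintegral_map hF e.symm.measurable]
    have hsymm : ∀ p : ℝ × (Fin q → ℝ), e.symm p = Fin.cons p.1 p.2 := by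
      intro p
      show (Fin.insertNthEquiv (fun _ : Fin (q+1) => ℝ) 0) p = _
      simp [Fin.insertNthEquiv, Fin.insertNth_zero']
    have key : ∀ p : ℝ × (Fin q → ℝ), Set.indicator (chainSet (q+1) x)
        (fun u => ENNReal.ofReal (c * (1 - lastVal x u)^k)) (e.symm p) =
        Set.indicator (Set.Ioo x 1)
          (fun y => Set.indicator (chainSet q y)
            (fun v => ENNReal.ofReal (c * (1 - lastVal y v)^k)) p.2) p.1 := by
      rintro ⟨y, v⟩
      rw [hsymm]
      by_cases hy : y ∈ Set.Ioo x 1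
      · by_cases hv : v ∈ chainSet q y
        · rw [Set.indicator_of_mem hy, Set.indicator_of_mem hv,
            Set.indicator_of_mem ((cons_mem_chainSet q x y v).2 ⟨hy, hv⟩)]
          simp [lastVal_cons]
        · rw [Set.indicator_of_mem hy, Set.indicator_of_notMem hv,
            Set.indicator_of_notMem (fun hmem => hv ((cons_mem_chainSet q x y v).1 hmem).2)]
      · rw [Set.indicator_of_notMem hy,
          Set.indicator_of_notMem (fun hmem => hy ((cons_mem_chainSet q x y v).1 hmem).1)]
    rw [show (∫⁻ p : ℝ × (Fin q → ℝ), Set.indicator (chainSet (q+1) x)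
        (fun u => ENNReal.ofReal (c * (1 - lastVal x u)^k)) (e.symm p)
        ∂(unif.prod (Measure.pi fun _ : Fin q => unif)))
      = ∫⁻ p : ℝ × (Fin q → ℝ), Set.indicator (Set.Ioo x 1)
          (fun y => Set.indicator (chainSet q y)
            (fun v => ENNReal.ofReal (c * (1 - lastVal y v)^k)) p.2) p.1
        ∂(unif.prod (Measure.pi fun _ : Fin q => unif)) from by
        exact lintegral_congr key]
    have hG : Measurable (fun p : ℝ × (Fin q → ℝ) => Set.indicator (Set.Ioo x 1)
          (fun y => Set.indicator (chainSet q y)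
            (fun v => ENNReal.ofReal (c * (1 - lastVal y v)^k)) p.2) p.1) := by
      have := hF.comp e.symm.measurable
      have heq : (fun p : ℝ × (Fin q → ℝ) => Set.indicator (Set.Ioo x 1)
          (fun y => Set.indicator (chainSet q y)
            (fun v => ENNReal.ofReal (c * (1 - lastVal y v)^k)) p.2) p.1)
          = (Set.indicator (chainSet (q+1) x)
            (fun u => ENNReal.ofReal (c * (1 - lastVal x u)^k))) ∘ e.symm := by
        funext p
        exact (key p).symm
      rw [heq]
      exact hF.comp e.symm.measurable
    rw [MeasureTheory.lintegral_prod _ hG.aemeasurable]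
    have inner : ∀ y : ℝ, (∫⁻ v, Set.indicator (Set.Ioo x 1)
          (fun y => Set.indicator (chainSet q y)
            (fun v => ENNReal.ofReal (c * (1 - lastVal y v)^k)) v) y
          ∂(Measure.pi fun _ : Fin q => unif))
        = Set.indicator (Set.Ioo x 1)
            (fun y => ENNReal.ofReal ((c * k.factorial / (k+q).factorial) * (1 - y)^(k+q))) y := by
      intro y
      by_cases hy : y ∈ Set.Ioo x 1
      · simp_rw [Set.indicator_of_mem hy]
        rw [ih y (le_of_lt (lt_of_le_of_lt hx0 hy.1)) (le_of_lt hy.2)]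
        congr 1
        ring
      · simp [Set.indicator_of_notMem hy]
    simp_rw [inner]
    rw [lintegral_indicator measurableSet_Ioo]
    have hsub : Set.Ioo x 1 ⊆ Set.Icc (0:ℝ) 1 := fun y hy =>
      ⟨le_of_lt (lt_of_le_of_lt hx0 hy.1), le_of_lt hy.2⟩
    rw [show (unif.restrict (Set.Ioo x 1)) = volume.restrict (Set.Ioo x 1) from by
      rw [unif, Measure.restrict_restrict measurableSet_Ioo,
        Set.inter_eq_self_of_subset_left hsub]]
    rw [lintegral_Ioo_pow x hx0 hx1 (k+q) _ (by positivity)]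
    congr 1
    have hkq : k + (q+1) = (k+q)+1 := by omega
    rw [hkq, Nat.factorial_succ]
    have h1 : ((k+q).factorial : ℝ) ≠ 0 := Nat.cast_ne_zero.2 (k+q).factorial_ne_zero
    have h2 : ((k+q:ℕ) : ℝ) + 1 ≠ 0 := by positivity
    push_cast
    field_simp
  
lemma measure_chainSet (q : ℕ) (x : ℝ) (hx0 : 0 ≤ x) (hx1 : x ≤ 1) :
    (Measure.pi fun _ : Fin q => unif) (chainSet q x)
      = ENNReal.ofReal ((1-x)^q / q.factorial) := by
  have h := chain_weight 0 1 zero_le_one q x hx0 hx1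
  simp only [pow_zero, mul_one, one_mul, Nat.factorial_zero, Nat.cast_one, zero_add] at h
  rw [lintegral_indicator (measurableSet_chainSet q x)] at h
  simp only [ENNReal.ofReal_one] at h
  rw [setLIntegral_one] at h
  exact h

lemma lastVal_mem {q : ℕ} {x : ℝ} {u : Fin q → ℝ} (hx0 : 0 ≤ x) (hx1 : x ≤ 1)
    (hu : u ∈ chainSet q x) : 0 ≤ lastVal x u ∧ lastVal x u ≤ 1 := by
  unfold lastVal
  split
  case isTrue h =>
    have := hu.2 ⟨q-1, by omega⟩
    exact ⟨le_of_lt (lt_of_le_of_lt hx0 this.1), le_of_lt this.2⟩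
  case isFalse h => exact ⟨hx0, hx1⟩

lemma measure_fullSet (q m : ℕ) (x : ℝ) (hx0 : 0 ≤ x) (hx1 : x ≤ 1) :
    ((Measure.pi fun _ : Fin q => unif).prod
        ((Measure.pi fun _ : Fin m => unif).prod (Measure.pi fun _ : Fin m => unif)))
        (fullSet q m x)
      = ENNReal.ofReal ((1 / ((m.factorial : ℝ) * m.factorial)) * (1-x)^(2*m+q)
          * (2*m).factorial / (2*m+q).factorial) := by
  rw [Measure.prod_apply (measurableSet_fullSet q m x)]
  have slice : ∀ u : Fin q → ℝ,
      ((Measure.pi fun _ : Fin m => unif).prod (Measure.pi fun _ : Fin m => unif))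
        (Prod.mk u ⁻¹' fullSet q m x)
      = Set.indicator (chainSet q x)
          (fun u => ENNReal.ofReal ((1 / ((m.factorial : ℝ) * m.factorial))
            * (1 - lastVal x u)^(2*m))) u := by
    intro u
    by_cases hu : u ∈ chainSet q x
    · rw [Set.indicator_of_mem hu]
      have hpre : Prod.mk u ⁻¹' fullSet q m x
          = chainSet m (lastVal x u) ×ˢ chainSet m (lastVal x u) := by
        ext w
        simp only [Set.mem_preimage, fullSet, Set.mem_setOf_eq, Set.mem_prod, hu, true_and]
      rw [hpre, Measure.prod_prod]
      obtain ⟨hl0, hl1⟩ := lastVal_mem hx0 hx1 hu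
      rw [measure_chainSet m _ hl0 hl1]
      rw [← ENNReal.ofReal_mul (div_nonneg (pow_nonneg (by linarith) m) (Nat.cast_nonneg _))]
      congr 1
      rw [two_mul, pow_add]
      have hm : (m.factorial : ℝ) ≠ 0 := Nat.cast_ne_zero.2 m.factorial_ne_zero
      field_simp
    · rw [Set.indicator_of_notMem hu]
      have hpre : Prod.mk u ⁻¹' fullSet q m x = ∅ := by
        ext w
        simp only [Set.mem_preimage, fullSet, Set.mem_setOf_eq, hu, false_and,
          Set.mem_empty_iff_false]
      rw [hpre, measure_empty]
  simp_rw [slice]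
  exact chain_weight (2*m) (1 / ((m.factorial : ℝ) * m.factorial)) (by positivity) q x hx0 hx1


lemma mp_restrict {ι : Type*} [Fintype ι] {δ : Type*} [Fintype δ]
    (μ0 : Measure ℝ) [IsProbabilityMeasure μ0] (f : δ → ι) (hf : Function.Injective f) :
    MeasurePreserving (fun (ω : ι → ℝ) => ω ∘ f)
      (Measure.pi fun _ => μ0) (Measure.pi fun _ => μ0) := by
  classical
  let p : ι → Prop := fun i => i ∈ Set.range f
  let E : (δ ⊕ {i // ¬ p i}) ≃ ι :=
    ((Equiv.ofInjective f hf).sumCongr (Equiv.refl {i // ¬ p i})).trans (Equiv.sumCompl p)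
  have mpA : MeasurePreserving
      (⇑(MeasurableEquiv.piCongrLeft (fun _ : ι => ℝ) E).symm)
      (Measure.pi fun _ : ι => μ0) (Measure.pi fun _ : δ ⊕ {i // ¬ p i} => μ0) :=
    MeasurePreserving.symm _ (measurePreserving_piCongrLeft (fun _ : ι => μ0) E)
  have mpB := measurePreserving_sumPiEquivProdPi
    (μ := fun _ : δ ⊕ {i // ¬ p i} => μ0)
  have mpC : MeasurePreserving (Prod.fst)
      ((Measure.pi fun _ : δ => μ0).prod (Measure.pi fun _ : {i // ¬ p i} => μ0))
      (Measure.pi fun _ : δ => μ0) := by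
    constructor
    · exact measurable_fst
    · rw [Measure.map_fst_prod]
      simp
  have hcomp := mpC.comp (mpB.comp mpA)
  have hfun : (fun (ω : ι → ℝ) => ω ∘ f) =
      (Prod.fst ∘ ((MeasurableEquiv.sumPiEquivProdPi (fun _ : δ ⊕ {i // ¬ p i} => ℝ))
        ∘ (MeasurableEquiv.piCongrLeft (fun _ : ι => ℝ) E).symm)) := by
    funext ω
    funext d
    show ω (f d) = (Equiv.piCongrLeft (fun _ : ι => ℝ) E).symm ω (Sum.inl d)
    rw [Equiv.piCongrLeft_symm_apply]
    simp [E, p]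
  rw [hfun]
  exact hcomp

lemma mp_triple {ι : Type*} [Fintype ι] (μ0 : Measure ℝ) [IsProbabilityMeasure μ0]
    {q m : ℕ} (c : Fin q → ι) (a b : Fin m → ι)
    (hinj : Function.Injective (Sum.elim c (Sum.elim a b))) :
    MeasurePreserving (fun ω : ι → ℝ => (ω ∘ c, ω ∘ a, ω ∘ b))
      (Measure.pi fun _ => μ0)
      ((Measure.pi fun _ : Fin q => μ0).prod
        ((Measure.pi fun _ : Fin m => μ0).prod (Measure.pi fun _ : Fin m => μ0))) := by
  have h1 := mp_restrict μ0 _ hinj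
  have h2 := measurePreserving_sumPiEquivProdPi
    (μ := fun _ : Fin q ⊕ (Fin m ⊕ Fin m) => μ0)
  have h3 := measurePreserving_sumPiEquivProdPi
    (μ := fun _ : Fin m ⊕ Fin m => μ0)
  have h4 := (MeasurePreserving.id (Measure.pi fun _ : Fin q => μ0)).prod h3
  have hcomp := h4.comp (h2.comp h1)
  have hfun : (fun ω : ι → ℝ => (ω ∘ c, ω ∘ a, ω ∘ b)) =
      ((Prod.map id (MeasurableEquiv.sumPiEquivProdPi (fun _ : Fin m ⊕ Fin m => ℝ)))
        ∘ ((MeasurableEquiv.sumPiEquivProdPi (fun _ : Fin q ⊕ (Fin m ⊕ Fin m) => ℝ))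
          ∘ (fun ω : ι → ℝ => ω ∘ (Sum.elim c (Sum.elim a b))))) := by
    funext ω
    rfl
  rw [hfun]
  exact hcomp


/-! ### Tree-side lemmas -/

def nd (L : ℕ) (g : Equiv.Perm (Fin L)) (k : ℕ) (h : k < L) : TreeNode L :=
  ⟨⟨k, Nat.lt_succ_of_lt h⟩, fun i => g ⟨(i : ℕ), lt_trans i.isLt h⟩⟩

lemma treePathVal_pos (L : ℕ) (x : ℝ) (ω : TreeOmega L) (g : Equiv.Perm (Fin L))
    (k : ℕ) (h : k < L) (hk : k ≠ 0) : treePathVal L x ω g k = ω (nd L g k h) := by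
  simp only [treePathVal, nd, dif_pos h, if_neg hk]

lemma treePathVal_zero (L : ℕ) (x : ℝ) (ω : TreeOmega L) (g : Equiv.Perm (Fin L))
    (h : 0 < L) : treePathVal L x ω g 0 = x := by
  simp [treePathVal, h]

lemma treePathVal_top (L : ℕ) (x : ℝ) (ω : TreeOmega L) (g : Equiv.Perm (Fin L))
    (k : ℕ) (h : L ≤ k) : treePathVal L x ω g k = 1 := by
  simp only [treePathVal, dif_neg (not_lt.2 h)]

lemma measurable_treePathVal (L : ℕ) (x : ℝ) (g : Equiv.Perm (Fin L)) (k : ℕ) :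
    Measurable fun ω : TreeOmega L => treePathVal L x ω g k := by
  unfold treePathVal
  split
  · split
    · exact measurable_const
    · exact measurable_pi_apply _
  · exact measurable_const

lemma measurableSet_openPath (L : ℕ) (x : ℝ) (g : Equiv.Perm (Fin L)) :
    MeasurableSet {ω : TreeOmega L | treeOpenPath L x ω g} := by
  have h : {ω : TreeOmega L | treeOpenPath L x ω g}
      = ⋂ k, {ω | k < L → treePathVal L x ω g k < treePathVal L x ω g (k+1)} := by
    ext ω
    simp [treeOpenPath, Set.mem_iInter]
  rw [h]
  refine MeasurableSet.iInter fun k => ?_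
  by_cases hk : k < L
  · simp only [hk, true_implies]
    exact measurableSet_lt (measurable_treePathVal L x g k) (measurable_treePathVal L x g (k+1))
  · simp only [hk, false_implies, Set.setOf_true]
    exact MeasurableSet.univ

lemma S_lt {L : ℕ} {x : ℝ} {ω : TreeOmega L} {g : Equiv.Perm (Fin L)}
    (hopen : treeOpenPath L x ω g) :
    ∀ k j, j < k → k ≤ L → treePathVal L x ω g j < treePathVal L x ω g k := by
  intro k
  induction k with
  | zero => intro j hj _; exact absurd hj (Nat.not_lt_zero j)
  | succ n ih =>
    intro j hj hkL
    have hn : n < L := by omega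
    rcases Nat.lt_or_ge j n with h | h
    · exact lt_trans (ih j h (by omega)) (hopen n hn)
    · have hjn : j = n := by omega
      subst hjn
      exact hopen j hn

lemma nd_congr (L : ℕ) (g g' : Equiv.Perm (Fin L)) (k : ℕ) (h : k < L)
    (hpref : ∀ i : Fin L, (i : ℕ) < k → g i = g' i) : nd L g k h = nd L g' k h := by
  unfold nd
  exact congrArg (fun f => (⟨⟨k, Nat.lt_succ_of_lt h⟩, f⟩ : TreeNode L))
    (funext fun i => hpref ⟨(i : ℕ), lt_trans i.isLt h⟩ i.isLt)

def ndEval (L : ℕ) (n : TreeNode L) (j : ℕ) : Option (Fin L) :=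
  if h : j < ((n.1 : Fin (L+1)) : ℕ) then some (n.2 ⟨j, h⟩) else none

lemma ndEval_nd (L : ℕ) (g : Equiv.Perm (Fin L)) (k : ℕ) (h : k < L) (j : ℕ)
    (hj : j < k) (hjL : j < L) : ndEval L (nd L g k h) j = some (g ⟨j, hjL⟩) := by
  unfold ndEval nd
  rw [dif_pos (show j < ((⟨⟨k, Nat.lt_succ_of_lt h⟩, fun i : Fin k =>
    g ⟨(i : ℕ), lt_trans i.isLt h⟩⟩ : TreeNode L).1 : ℕ) from hj)]

lemma nd_level (L : ℕ) (g : Equiv.Perm (Fin L)) (k : ℕ) (h : k < L) :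
    ((nd L g k h).1 : ℕ) = k := rfl

/-- The key equivalence: the path of `g` is open iff the selected values form chains. -/
lemma open_iff_chains (L q m : ℕ) (hL : 2 ≤ L) (hq : q + m + 1 = L) (x : ℝ)
    (ω : TreeOmega L) (g : Equiv.Perm (Fin L)) (u : Fin q → ℝ) (v : Fin m → ℝ)
    (hu : ∀ i : Fin q, u i = treePathVal L x ω g ((i : ℕ)+1))
    (hv : ∀ i : Fin m, v i = treePathVal L x ω g (q+1+(i : ℕ))) :
    treeOpenPath L x ω g ↔ (u ∈ chainSet q x ∧ v ∈ chainSet m (lastVal x u)) := by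
  set S := treePathVal L x ω g with hSdef
  have hS0 : S 0 = x := treePathVal_zero L x ω g (by omega)
  have hSL : S L = 1 := treePathVal_top L x ω g L le_rfl
  have hlast : lastVal x u = S q := by
    unfold lastVal
    split
    case isTrue h =>
      rw [hu ⟨q-1, by omega⟩]
      congr 1
      simp only [show ((⟨q-1, by omega⟩ : Fin q) : ℕ) = q - 1 from rfl]
      omega
    case isFalse h =>
      rw [show q = 0 by omega, hS0]
  constructor
  · intro hopen
    have hlt := S_lt hopen
    refine ⟨⟨fun i j hij => ?_, fun i => ⟨?_, ?_⟩⟩, fun i j hij => ?_, fun i => ⟨?_, ?_⟩⟩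
    · rw [hu i, hu j]
      exact hlt ((j : ℕ)+1) ((i : ℕ)+1) (by omega) (by have := j.isLt; omega)
    · rw [hu i, ← hS0]
      exact hlt ((i : ℕ)+1) 0 (by omega) (by have := i.isLt; omega)
    · rw [hu i, ← hSL]
      exact hlt L ((i : ℕ)+1) (by have := i.isLt; omega) le_rfl
    · rw [hv i, hv j]
      exact hlt (q+1+(j : ℕ)) (q+1+(i : ℕ)) (by omega) (by have := j.isLt; omega)
    · rw [hv i, hlast]
      exact hlt (q+1+(i : ℕ)) q (by omega) (by have := i.isLt; omega)
    · rw [hv i, ← hSL]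
      exact hlt L (q+1+(i : ℕ)) (by have := i.isLt; omega) le_rfl
  · rintro ⟨⟨humono, hub⟩, hvmono, hvb⟩ k hkL
    show S k < S (k+1)
    rcases Nat.lt_trichotomy k q with hkq | hkq | hkq
    · have hk1 : S (k+1) = u ⟨k, hkq⟩ := (hu ⟨k, hkq⟩).symm
      rcases Nat.eq_zero_or_pos k with rfl | hk0
      · rw [hk1, hS0]
        exact (hub ⟨0, hkq⟩).1
      · have hk2 : S k = u ⟨k-1, by omega⟩ := by
          rw [hu ⟨k-1, by omega⟩]
          congr 1
          simp only [show ((⟨k-1, by omega⟩ : Fin q) : ℕ) = k - 1 from rfl]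
          omega
        rw [hk2, hk1]
        exact humono _ _ (Fin.mk_lt_mk.mpr (by omega))
    · subst hkq
      rcases Nat.eq_zero_or_pos m with hm0 | hm1
      · have hb2 : S (k+1) = 1 := treePathVal_top L x ω g (k+1) (by omega)
        have hq0 : 0 < k := by omega
        have hk2 : S k = u ⟨k-1, by omega⟩ := by
          rw [hu ⟨k-1, by omega⟩]
          congr 1
          simp only [show ((⟨k-1, by omega⟩ : Fin k) : ℕ) = k - 1 from rfl]
          omega
        rw [hk2, hb2]
        exact (hub _).2
      · have h1 : S (k+1) = v ⟨0, hm1⟩ := by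
          rw [hv ⟨0, hm1⟩]
          rfl
        rw [h1, ← hlast]
        exact (hvb _).1
    · have hik : k - q - 1 < m := by omega
      have hk2 : S k = v ⟨k-q-1, hik⟩ := by
        rw [hv ⟨k-q-1, hik⟩]
        congr 1
        simp only [show ((⟨k-q-1, hik⟩ : Fin m) : ℕ) = k-q-1 from rfl]
        omega
      by_cases hkL1 : k + 1 = L
      · have hb2 : S (k+1) = 1 := treePathVal_top L x ω g (k+1) (by omega)
        rw [hk2, hb2]
        exact (hvb _).2
      · have hik1 : k - q < m := by omega
        have hk3 : S (k+1) = v ⟨k-q, hik1⟩ := by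
          rw [hv ⟨k-q, hik1⟩]
          congr 1
          simp only [show ((⟨k-q, hik1⟩ : Fin m) : ℕ) = k-q from rfl]
          omega
        rw [hk2, hk3]
        exact hvmono _ _ (Fin.mk_lt_mk.mpr (by omega))

lemma pair_measure (L q m : ℕ) (hL : 2 ≤ L) (hq : q + m + 1 = L)
    (x : ℝ) (hx0 : 0 ≤ x) (hx1 : x ≤ 1) (g g' : Equiv.Perm (Fin L))
    (hpref : ∀ i : Fin L, (i : ℕ) < q → g i = g' i)
    (hdis : 1 ≤ m → g ⟨q, by omega⟩ ≠ g' ⟨q, by omega⟩) :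
    treeMeasure L {ω | treeOpenPath L x ω g ∧ treeOpenPath L x ω g'}
      = ENNReal.ofReal ((1 / ((m.factorial : ℝ) * m.factorial)) * (1-x)^(2*m+q)
          * (2*m).factorial / (2*m+q).factorial) := by
  have hqL : q < L := by omega
  set c : Fin q → TreeNode L :=
    (fun i => nd L g ((i:ℕ)+1) (by have := i.isLt; omega)) with hc
  set a : Fin m → TreeNode L :=
    (fun i => nd L g (q+1+(i:ℕ)) (by have := i.isLt; omega)) with ha
  set b : Fin m → TreeNode L :=
    (fun i => nd L g' (q+1+(i:ℕ)) (by have := i.isLt; omega)) with hb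
  have hinj : Function.Injective (Sum.elim c (Sum.elim a b)) := by
    intro s t hst
    have hlvl := congrArg (fun n : TreeNode L => ((n.1 : Fin (L+1)) : ℕ)) hst
    rcases s with i | s
    · rcases t with j | t
      · simp only [Sum.elim_inl, hc, nd_level] at hlvl
        exact congrArg Sum.inl (Fin.ext (by omega))
      · exfalso
        rcases t with j | j <;>
          (simp only [Sum.elim_inl, Sum.elim_inr, hc, ha, hb, nd_level] at hlvl;
           have := i.isLt; omega)
    · rcases t with j | t
      · exfalso
        rcases s with i | i <;>
          (simp only [Sum.elim_inl, Sum.elim_inr, hc, ha, hb, nd_level] at hlvl;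
           have := j.isLt; omega)
      · rcases s with i | i <;> rcases t with j | j
        · simp only [Sum.elim_inr, Sum.elim_inl, ha, nd_level] at hlvl
          exact congrArg (Sum.inr ∘ Sum.inl) (Fin.ext (by omega))
        · exfalso
          simp only [Sum.elim_inr, Sum.elim_inl, ha, hb, nd_level] at hlvl
          have hij : i = j := Fin.ext (by omega)
          subst hij
          have hev := congrArg (fun n => ndEval L n q) hst
          simp only [Sum.elim_inr, Sum.elim_inl, ha, hb] at hev
          rw [ndEval_nd L g _ _ q (by omega) hqL,
            ndEval_nd L g' _ _ q (by omega) hqL] at hev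
          exact hdis i.pos (Option.some.inj hev)
        · exfalso
          simp only [Sum.elim_inr, Sum.elim_inl, ha, hb, nd_level] at hlvl
          have hij : i = j := Fin.ext (by omega)
          subst hij
          have hev := congrArg (fun n => ndEval L n q) hst
          simp only [Sum.elim_inr, Sum.elim_inl, ha, hb] at hev
          rw [ndEval_nd L g' _ _ q (by omega) hqL,
            ndEval_nd L g _ _ q (by omega) hqL] at hev
          exact hdis i.pos (Option.some.inj hev).symm
        · simp only [Sum.elim_inr, hb, nd_level] at hlvl
          exact congrArg (Sum.inr ∘ Sum.inr) (Fin.ext (by omega))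
  have hset : {ω : TreeOmega L | treeOpenPath L x ω g ∧ treeOpenPath L x ω g'}
      = (fun ω : TreeOmega L => (ω ∘ c, ω ∘ a, ω ∘ b)) ⁻¹' fullSet q m x := by
    ext ω
    simp only [Set.mem_setOf_eq, Set.mem_preimage]
    have h1 := open_iff_chains L q m hL hq x ω g (ω ∘ c) (ω ∘ a)
      (fun i => (treePathVal_pos L x ω g ((i:ℕ)+1) (by have := i.isLt; omega)
        (Nat.succ_ne_zero _)).symm)
      (fun i => (treePathVal_pos L x ω g (q+1+(i:ℕ)) (by have := i.isLt; omega)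
        (by omega)).symm)
    have h2 := open_iff_chains L q m hL hq x ω g' (ω ∘ c) (ω ∘ b)
      (fun i => by
        have hcongr : c i = nd L g' ((i:ℕ)+1) (by have := i.isLt; omega) :=
          nd_congr L g g' ((i:ℕ)+1) (by have := i.isLt; omega)
            (fun ii hii => hpref ii (by have := i.isLt; omega))
        show ω (c i) = _
        rw [hcongr]
        exact (treePathVal_pos L x ω g' ((i:ℕ)+1) (by have := i.isLt; omega)
          (Nat.succ_ne_zero _)).symm)
      (fun i => (treePathVal_pos L x ω g' (q+1+(i:ℕ)) (by have := i.isLt; omega)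
        (by omega)).symm)
    rw [h1, h2]
    show _ ↔ (ω ∘ c, ω ∘ a, ω ∘ b) ∈ fullSet q m x
    simp only [fullSet, Set.mem_setOf_eq]
    constructor
    · rintro ⟨⟨hcc, hv⟩, -, hw⟩
      exact ⟨hcc, hv, hw⟩
    · rintro ⟨hcc, hv, hw⟩
      exact ⟨⟨hcc, hv⟩, hcc, hw⟩
  rw [hset]
  have mp := mp_triple (ι := TreeNode L) unif c a b hinj
  rw [show treeMeasure L = Measure.pi fun _ : TreeNode L => unif from rfl]
  rw [mp.measure_preimage (measurableSet_fullSet q m x).nullMeasurableSet]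
  exact measure_fullSet q m x hx0 hx1

/-! ### Counting lemmas -/

lemma perm_eq_of_agree_except {L : ℕ} (g g' : Equiv.Perm (Fin L)) (z : Fin L)
    (h : ∀ i, i ≠ z → g i = g' i) : g = g' := by
  have hz : g z = g' z := by
    by_contra hne
    set j := g.symm (g' z) with hj
    have hgj : g j = g' z := g.apply_symm_apply _
    have hjz : j ≠ z := by
      intro hh
      rw [hh] at hgj
      exact hne hgj
    have := h j hjz
    rw [this] at hgj
    exact hjz (g'.injective hgj)
  refine Equiv.ext fun i => ?_
  by_cases hi : i = z
  · rw [hi]; exact hz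
  · exact h i hi

lemma disag_nonempty {L : ℕ} {g g' : Equiv.Perm (Fin L)} (hne : g ≠ g') :
    (Finset.univ.filter fun i => g i ≠ g' i).Nonempty := by
  obtain ⟨i, hi⟩ : ∃ i, g i ≠ g' i := by
    by_contra h
    push_neg at h
    exact hne (Equiv.ext h)
  exact ⟨i, Finset.mem_filter.2 ⟨Finset.mem_univ _, hi⟩⟩

open Classical in
def pfN (L : ℕ) (g g' : Equiv.Perm (Fin L)) : ℕ :=
  if h : g = g' then 0
  else (((Finset.univ.filter fun i => g i ≠ g' i)).min' (disag_nonempty h) : ℕ)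

lemma pfN_lt {L : ℕ} {g g' : Equiv.Perm (Fin L)} (hne : g ≠ g') : pfN L g g' < L := by
  rw [pfN, dif_neg hne]
  exact (((Finset.univ.filter fun i => g i ≠ g' i)).min' (disag_nonempty hne)).isLt

lemma pfN_pref {L : ℕ} {g g' : Equiv.Perm (Fin L)} (hne : g ≠ g') :
    ∀ i : Fin L, (i : ℕ) < pfN L g g' → g i = g' i := by
  intro i hi
  by_contra hd
  have hmem : i ∈ (Finset.univ.filter fun i => g i ≠ g' i) :=
    Finset.mem_filter.2 ⟨Finset.mem_univ _, hd⟩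
  have := Finset.min'_le _ i hmem
  rw [pfN, dif_neg hne] at hi
  exact absurd hi (not_lt.2 this)

lemma pfN_dis {L : ℕ} {g g' : Equiv.Perm (Fin L)} (hne : g ≠ g') :
    g ⟨pfN L g g', pfN_lt hne⟩ ≠ g' ⟨pfN L g g', pfN_lt hne⟩ := by
  have hmem := Finset.min'_mem (Finset.univ.filter fun i => g i ≠ g' i) (disag_nonempty hne)
  have hd := (Finset.mem_filter.1 hmem).2
  have heq : (⟨pfN L g g', pfN_lt hne⟩ : Fin L)
      = ((Finset.univ.filter fun i => g i ≠ g' i)).min' (disag_nonempty hne) := by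
    apply Fin.ext
    show pfN L g g' = (((Finset.univ.filter fun i => g i ≠ g' i)).min' (disag_nonempty hne) : ℕ)
    rw [pfN, dif_neg hne]
  rw [heq]
  exact hd

lemma pfN_le {L : ℕ} (hL : 2 ≤ L) {g g' : Equiv.Perm (Fin L)} (hne : g ≠ g') :
    pfN L g g' ≤ L - 2 := by
  by_contra h
  push_neg at h
  have hlt := pfN_lt hne
  have hq : pfN L g g' = L - 1 := by omega
  have : g = g' := by
    refine perm_eq_of_agree_except g g' ⟨L-1, by omega⟩ fun i hi => ?_
    refine pfN_pref hne i ?_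
    rw [hq]
    have : (i : ℕ) ≠ L - 1 := fun hh => hi (Fin.ext hh)
    have := i.isLt
    omega
  exact hne this

lemma pfN_eq_iff {L : ℕ} {g g' : Equiv.Perm (Fin L)} (hne : g ≠ g') (q : ℕ) (hqL : q < L) :
    pfN L g g' = q ↔ ((∀ i : Fin L, (i : ℕ) < q → g i = g' i) ∧ g ⟨q, hqL⟩ ≠ g' ⟨q, hqL⟩) := by
  classical
  constructor
  · rintro rfl
    exact ⟨pfN_pref hne, pfN_dis hne⟩
  · rintro ⟨hagree, hd⟩
    have h1 : q ≤ pfN L g g' := by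
      by_contra hh
      push_neg at hh
      exact pfN_dis hne (hagree _ hh)
    have h2 : pfN L g g' ≤ q := by
      rw [pfN, dif_neg hne]
      have hmm := Finset.min'_le (Finset.univ.filter fun i => g i ≠ g' i) ⟨q, hqL⟩
        (Finset.mem_filter.2 ⟨Finset.mem_univ _, hd⟩)
      exact Fin.le_def.mp hmm
    omega

lemma card_fixing (L k : ℕ) (hk : k ≤ L) :
    (Finset.univ.filter fun σ : Equiv.Perm (Fin L) =>
      ∀ i : Fin L, (i : ℕ) < k → σ i = i).card = (L - k).factorial := by
  classical
  let p : Fin L → Prop := fun i => ¬ (i : ℕ) < k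
  have hfe : (Finset.univ.filter fun σ : Equiv.Perm (Fin L) =>
      ∀ i : Fin L, (i : ℕ) < k → σ i = i)
      = (Finset.univ.filter fun σ : Equiv.Perm (Fin L) => ∀ i : Fin L, ¬ p i → σ i = i) := by
    apply Finset.filter_congr
    intro σ _
    simp only [p, not_not]
  rw [hfe]
  have h1 : (Finset.univ.filter fun σ : Equiv.Perm (Fin L) =>
      ∀ i : Fin L, ¬ p i → σ i = i).card
      = Fintype.card {σ : Equiv.Perm (Fin L) // ∀ i : Fin L, ¬ p i → σ i = i} :=
    (Fintype.card_subtype _).symm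
  rw [h1, ← Fintype.card_congr (Equiv.Perm.subtypeEquivSubtypePerm p), Fintype.card_perm]
  congr 1
  have e2 : Subtype p ≃ Fin (L - k) :=
    { toFun := fun i => ⟨(i : Fin L) - k, by
        obtain ⟨⟨iv, hiv⟩, hip⟩ := i
        simp only [p, not_lt] at hip
        simp only []
        omega⟩
      invFun := fun j => ⟨⟨(j : ℕ) + k, by omega⟩, by
        simp only [p, not_lt]
        omega⟩
      left_inv := fun i => by
        obtain ⟨⟨iv, hiv⟩, hip⟩ := i
        simp only [p, not_lt] at hip
        apply Subtype.ext
        apply Fin.ext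
        simp only []
        omega
      right_inv := fun j => by
        apply Fin.ext
        simp only []
        omega }
  rw [Fintype.card_congr e2, Fintype.card_fin]

lemma card_agree (L k : ℕ) (hk : k ≤ L) (g : Equiv.Perm (Fin L)) :
    (Finset.univ.filter fun g' : Equiv.Perm (Fin L) =>
      ∀ i : Fin L, (i : ℕ) < k → g i = g' i).card = (L - k).factorial := by
  classical
  rw [← card_fixing L k hk]
  refine Finset.card_bij' (fun g' _ => g'.trans g.symm) (fun σ _ => σ.trans g) ?_ ?_ ?_ ?_
  · intro g' hg'
    simp only [Finset.mem_filter, Finset.mem_univ, true_and] at hg' ⊢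
    intro i hi
    simp only [Equiv.trans_apply]
    rw [← hg' i hi]
    exact g.symm_apply_apply i
  · intro σ hσ
    simp only [Finset.mem_filter, Finset.mem_univ, true_and] at hσ ⊢
    intro i hi
    simp only [Equiv.trans_apply]
    rw [hσ i hi]
  · intro g' _
    ext i
    simp
  · intro σ _
    ext i
    simp

lemma card_fiber (L q : ℕ) (hL : 2 ≤ L) (hq : q ≤ L - 2) (g : Equiv.Perm (Fin L)) :
    (Finset.univ.filter fun g' : Equiv.Perm (Fin L) =>
        g ≠ g' ∧ pfN L g g' = q).card
      = (L - q).factorial - (L - q - 1).factorial := by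
  classical
  have hqL : q < L := by omega
  have hfe : (Finset.univ.filter fun g' : Equiv.Perm (Fin L) => g ≠ g' ∧ pfN L g g' = q)
      = (Finset.univ.filter fun g' : Equiv.Perm (Fin L) =>
          ∀ i : Fin L, (i : ℕ) < q → g i = g' i)
        \ (Finset.univ.filter fun g' : Equiv.Perm (Fin L) =>
          ∀ i : Fin L, (i : ℕ) < q + 1 → g i = g' i) := by
    ext g'
    simp only [Finset.mem_filter, Finset.mem_sdiff, Finset.mem_univ, true_and, not_forall,
      Classical.not_imp]
    constructor
    · rintro ⟨hne, hpf⟩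
      obtain ⟨hagree, hd⟩ := (pfN_eq_iff hne q hqL).1 hpf
      exact ⟨hagree, ⟨⟨q, hqL⟩, Nat.lt_succ_self q, hd⟩⟩
    · rintro ⟨hagree, ⟨i, hi, hd⟩⟩
      have hiq : (i : ℕ) = q := by
        by_contra hh
        exact hd (hagree i (by omega))
      have hne : g ≠ g' := by
        intro hgg
        exact hd (by rw [hgg])
      refine ⟨hne, (pfN_eq_iff hne q hqL).2 ⟨hagree, ?_⟩⟩
      have : i = ⟨q, hqL⟩ := Fin.ext hiq
      rwa [this] at hd
  rw [hfe, Finset.card_sdiff_of_subset]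
  · rw [card_agree L q (by omega) g, card_agree L (q+1) (by omega) g,
      show L - (q+1) = L - q - 1 by omega]
  · intro g' hg'
    simp only [Finset.mem_filter, Finset.mem_univ, true_and] at hg' ⊢
    intro i hi
    exact hg' i (by omega)

lemma term_eq (L q : ℕ) (hL : 2 ≤ L) (hq : q ≤ L - 2) (x : ℝ) (hx1 : x ≤ 1) :
    ((L.factorial * ((L - q).factorial - (L - q - 1).factorial) : ℕ) : ℝ)
      * ENNReal.toReal (ENNReal.ofReal ((1 / (((L-1-q).factorial : ℝ) * (L-1-q).factorial))
          * (1-x)^(2*(L-1-q)+q) * (2*(L-1-q)).factorial / (2*(L-1-q)+q).factorial))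
    = aCoef L q * (1-x)^(2*L - q - 2) := by
  set m := L - 1 - q with hm
  have hm1 : 1 ≤ m := by omega
  have h1x : (0:ℝ) ≤ 1 - x := by linarith
  rw [ENNReal.toReal_ofReal (by
    apply div_nonneg _ (Nat.cast_nonneg _)
    apply mul_nonneg _ (Nat.cast_nonneg _)
    apply mul_nonneg _ (pow_nonneg h1x _)
    positivity)]
  have e1 : L - q = m + 1 := by omega
  have e2 : L - q - 1 = m := by omega
  have e3 : 2*L - q - 2 = 2*m + q := by omega
  have e4 : L - q - 2 = m - 1 := by omega
  have e5 : 2*L - 2*q - 2 = 2*m := by omega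
  rw [aCoef, e4, e5, e3, e2, e1]
  have hfle : m.factorial ≤ (m+1).factorial := Nat.factorial_le (by omega)
  push_cast [Nat.cast_sub hfle, Nat.factorial_succ]
  have hmf : (m.factorial : ℝ) = m * (m-1).factorial := by
    conv_lhs => rw [show m = (m-1)+1 by omega]
    rw [Nat.factorial_succ]
    push_cast [Nat.cast_sub (show 1 ≤ m by omega)]
    ring
  rw [hmf]
  have hz1 : ((m-1).factorial : ℝ) ≠ 0 := Nat.cast_ne_zero.2 (Nat.factorial_ne_zero _)
  have hz2 : ((2*m+q).factorial : ℝ) ≠ 0 := Nat.cast_ne_zero.2 (Nat.factorial_ne_zero _)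
  have hz3 : (m : ℝ) ≠ 0 := Nat.cast_ne_zero.2 (by omega)
  field_simp
  rw [show (m+1)*m.factorial - m.factorial = m * m.factorial by
    rw [Nat.add_mul, one_mul, Nat.add_sub_cancel]]
  push_cast
  rw [hmf]
  ring

end aux

/-- exact second moment of `Θ` on the tree. -/
theorem tree_second_moment (L : ℕ) (hL : 2 ≤ L) (x : ℝ) (hx : x ∈ Set.Icc (0:ℝ) 1) :
    (∫ ω, ((treeTheta L x ω : ℝ)) ^ 2 ∂ treeMeasure L) =
      (∑ q ∈ Finset.range (L - 1), aCoef L q * (1 - x) ^ (2 * L - q - 2)) +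
        (L : ℝ) * (1 - x) ^ (L - 1) := by
  classical
  obtain ⟨hx0, hx1⟩ := hx
  set E : Equiv.Perm (Fin L) × Equiv.Perm (Fin L) → Set (TreeOmega L) :=
    fun p => {ω | treeOpenPath L x ω p.1 ∧ treeOpenPath L x ω p.2} with hE
  have hEmeas : ∀ p : Equiv.Perm (Fin L) × Equiv.Perm (Fin L), MeasurableSet (E p) := by
    intro p
    have h : E p = {ω | treeOpenPath L x ω p.1} ∩ {ω | treeOpenPath L x ω p.2} := rfl
    rw [h]
    exact (measurableSet_openPath L x p.1).inter (measurableSet_openPath L x p.2)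
  have hpt : ∀ ω, ((treeTheta L x ω : ℝ)) ^ 2
      = ∑ p : Equiv.Perm (Fin L) × Equiv.Perm (Fin L),
          Set.indicator (E p) (fun _ => (1:ℝ)) ω := by
    intro ω
    have h1 : ((treeTheta L x ω : ℝ))
        = ∑ g : Equiv.Perm (Fin L), if treeOpenPath L x ω g then (1:ℝ) else 0 := by
      rw [treeTheta, Finset.card_filter]
      push_cast
      rfl
    rw [Fintype.sum_prod_type, pow_two, h1, Finset.sum_mul_sum]
    refine Finset.sum_congr rfl fun g _ => Finset.sum_congr rfl fun g' _ => ?_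
    by_cases hg : treeOpenPath L x ω g <;> by_cases hg' : treeOpenPath L x ω g' <;>
      simp [Set.indicator_apply, hE, hg, hg', Set.mem_setOf_eq]
  have hint : ∀ p : Equiv.Perm (Fin L) × Equiv.Perm (Fin L),
      Integrable (Set.indicator (E p) (fun _ => (1:ℝ))) (treeMeasure L) := fun p =>
    (integrable_indicator_iff (hEmeas p)).2
      (integrableOn_const (measure_ne_top _ _) (by simp))
  have hmain : (∫ ω, ((treeTheta L x ω : ℝ)) ^ 2 ∂ treeMeasure L)
      = ∑ p : Equiv.Perm (Fin L) × Equiv.Perm (Fin L), ((treeMeasure L) (E p)).toReal := by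
    rw [integral_congr_ae (Filter.Eventually.of_forall hpt),
      integral_finset_sum _ (fun p _ => hint p)]
    refine Finset.sum_congr rfl fun p _ => ?_
    rw [integral_indicator_const (1:ℝ) (hEmeas p), smul_eq_mul, mul_one]
    rfl
  rw [hmain, ← Finset.sum_filter_add_sum_filter_not Finset.univ
    (fun p : Equiv.Perm (Fin L) × Equiv.Perm (Fin L) => p.1 = p.2)
    (fun p => ((treeMeasure L) (E p)).toReal)]
  have hdiag : ∑ p ∈ Finset.univ.filter
      (fun p : Equiv.Perm (Fin L) × Equiv.Perm (Fin L) => p.1 = p.2),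
      ((treeMeasure L) (E p)).toReal = (L : ℝ) * (1 - x) ^ (L - 1) := by
    have hval : ∀ p ∈ Finset.univ.filter
        (fun p : Equiv.Perm (Fin L) × Equiv.Perm (Fin L) => p.1 = p.2),
        ((treeMeasure L) (E p)).toReal = (1 - x)^(L-1) / (L-1).factorial := by
      intro p hp
      have hp2 : p.1 = p.2 := (Finset.mem_filter.1 hp).2
      have hpm := pair_measure L (L-1) 0 hL (by omega) x hx0 hx1 p.1 p.2
        (fun i _ => by rw [hp2]) (fun h => absurd h (by omega))
      rw [hE]
      simp only []
      rw [hpm]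
      have harg : (1 / ((Nat.factorial 0 : ℝ) * Nat.factorial 0)) * (1-x)^(2*0+(L-1))
          * (Nat.factorial (2*0)) / (Nat.factorial (2*0+(L-1)))
          = (1-x)^(L-1) / (L-1).factorial := by
        norm_num
      rw [harg, ENNReal.toReal_ofReal
        (div_nonneg (pow_nonneg (by linarith) _) (Nat.cast_nonneg _))]
    rw [Finset.sum_congr rfl hval, Finset.sum_const]
    have hcard : (Finset.univ.filter
        (fun p : Equiv.Perm (Fin L) × Equiv.Perm (Fin L) => p.1 = p.2)).card
        = L.factorial := by
      have himg : (Finset.univ.filter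
          (fun p : Equiv.Perm (Fin L) × Equiv.Perm (Fin L) => p.1 = p.2))
          = Finset.univ.image (fun g : Equiv.Perm (Fin L) => (g, g)) := by
        ext p
        simp only [Finset.mem_filter, Finset.mem_univ, true_and, Finset.mem_image]
        constructor
        · intro h
          exact ⟨p.1, Prod.ext rfl h⟩
        · rintro ⟨g, rfl⟩
          rfl
      rw [himg, Finset.card_image_of_injective _ (fun a b h => congrArg Prod.fst h),
        Finset.card_univ, Fintype.card_perm, Fintype.card_fin]
    rw [hcard, nsmul_eq_mul]
    have hLf : (L.factorial : ℝ) = L * (L-1).factorial := by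
      conv_lhs => rw [show L = (L-1)+1 by omega]
      rw [Nat.factorial_succ]
      push_cast [Nat.cast_sub (show 1 ≤ L by omega)]
      ring
    rw [hLf]
    have hz : ((L-1).factorial : ℝ) ≠ 0 := Nat.cast_ne_zero.2 (Nat.factorial_ne_zero _)
    field_simp
  have hoff : ∑ p ∈ Finset.univ.filter
      (fun p : Equiv.Perm (Fin L) × Equiv.Perm (Fin L) => ¬ p.1 = p.2),
      ((treeMeasure L) (E p)).toReal
      = ∑ q ∈ Finset.range (L-1), aCoef L q * (1-x)^(2*L - q - 2) := by
    rw [← Finset.sum_fiberwise_of_maps_to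
      (g := fun p : Equiv.Perm (Fin L) × Equiv.Perm (Fin L) => pfN L p.1 p.2)
      (t := Finset.range (L-1))
      (fun p hp => Finset.mem_range.2 (by
        have hne : p.1 ≠ p.2 := (Finset.mem_filter.1 hp).2
        have h2 := pfN_le hL hne
        show pfN L p.1 p.2 < L - 1
        omega))
      (fun p => ((treeMeasure L) (E p)).toReal)]
    refine Finset.sum_congr rfl fun q hq => ?_
    have hqr : q ≤ L - 2 := by have := Finset.mem_range.1 hq; omega
    have hval : ∀ p ∈ (Finset.univ.filter
        (fun p : Equiv.Perm (Fin L) × Equiv.Perm (Fin L) => ¬ p.1 = p.2)).filter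
        (fun p => pfN L p.1 p.2 = q),
        ((treeMeasure L) (E p)).toReal
          = ENNReal.toReal (ENNReal.ofReal
              ((1 / (((L-1-q).factorial : ℝ) * (L-1-q).factorial))
              * (1-x)^(2*(L-1-q)+q) * (2*(L-1-q)).factorial
              / (2*(L-1-q)+q).factorial)) := by
      intro p hp
      simp only [Finset.mem_filter] at hp
      have hne : p.1 ≠ p.2 := hp.1.2
      have hpf : pfN L p.1 p.2 = q := hp.2
      have hqL : q < L := by omega
      obtain ⟨hagree, hd⟩ := (pfN_eq_iff hne q hqL).1 hpf
      rw [hE]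
      simp only []
      rw [pair_measure L q (L-1-q) hL (by omega) x hx0 hx1 p.1 p.2 hagree (fun _ => hd)]
    rw [Finset.sum_congr rfl hval, Finset.sum_const]
    have hcard : ((Finset.univ.filter
        (fun p : Equiv.Perm (Fin L) × Equiv.Perm (Fin L) => ¬ p.1 = p.2)).filter
        (fun p => pfN L p.1 p.2 = q)).card
        = L.factorial * ((L-q).factorial - (L-q-1).factorial) := by
      rw [Finset.filter_filter]
      rw [Finset.card_eq_sum_card_fiberwise
        (f := Prod.fst) (t := Finset.univ) (fun _ _ => Finset.mem_univ _)]
      have hper : ∀ g ∈ (Finset.univ : Finset (Equiv.Perm (Fin L))),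
          ((Finset.univ.filter (fun p : Equiv.Perm (Fin L) × Equiv.Perm (Fin L) =>
            ¬ p.1 = p.2 ∧ pfN L p.1 p.2 = q)).filter
            (fun p => p.1 = g)).card = (L-q).factorial - (L-q-1).factorial := by
        intro g _
        rw [← card_fiber L q hL hqr g]
        refine Finset.card_bij' (fun p _ => p.2) (fun g' _ => (g, g')) ?_ ?_ ?_ ?_
        · intro p hp
          simp only [Finset.mem_filter, Finset.mem_univ, true_and] at hp ⊢
          obtain ⟨⟨hne, hpf⟩, hfst⟩ := hp
          constructor
          · rw [← hfst]; exact hne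
          · rw [← hfst]; exact hpf
        · intro g' hg'
          simp only [Finset.mem_filter, Finset.mem_univ, true_and] at hg' ⊢
          exact ⟨⟨hg'.1, hg'.2⟩, by trivial⟩
        · intro p hp
          simp only [Finset.mem_filter] at hp
          exact Prod.ext hp.2.symm rfl
        · intro g' _
          rfl
      rw [Finset.sum_congr rfl hper, Finset.sum_const, Finset.card_univ,
        Fintype.card_perm, Fintype.card_fin, smul_eq_mul]
    rw [hcard, nsmul_eq_mul]
    exact term_eq L q hL hqr x hx1
  rw [hdiag, hoff, add_comm]


end
end

section
/- Set q₀(L) = ⌈ ln(L²)/ln 2 + 1 ⌉. There exists an integer L₀ such that for every L ≥ L₀: (i) a(L,q) ≤ L²·(1.99)^{−q} for every integer q with 0 ≤ q ≤ q₀(L); and (ii) a(L,q) ≤ 2 for every integer q with q₀(L) ≤ q ≤ L−2. -/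
open MeasureTheory Real Filter Topology ProbabilityTheory

noncomputable section

/-! ### Auxiliary lemmas for `aCoef_bounds` -/

set_option maxRecDepth 8000 in
set_option maxHeartbeats 1000000 in
private lemma aux_aCoef_pos (L q : ℕ) : 0 < aCoef L q := by
  unfold aCoef
  positivity

private lemma aux_aCoef_rec (q m : ℕ) :
    aCoef (q+m+3) (q+1) * (((2*m+4)*(2*m+3) : ℕ) : ℝ)
      = aCoef (q+m+3) q * (((m+1)*(2*m+q+4) : ℕ) : ℝ) := by
  unfold aCoef
  have e1 : 2*(q+m+3) - 2*(q+1) - 2 = 2*m+2 := by omega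
  have e2 : (q+m+3) - (q+1) - 2 = m := by omega
  have e3 : 2*(q+m+3) - (q+1) - 2 = 2*m+q+3 := by omega
  have e4 : 2*(q+m+3) - 2*q - 2 = 2*m+4 := by omega
  have e5 : (q+m+3) - q - 2 = m+1 := by omega
  have e6 : 2*(q+m+3) - q - 2 = 2*m+q+4 := by omega
  rw [e1, e2, e3, e4, e5, e6]
  have f1 : (2*m+4).factorial = (2*m+4) * ((2*m+3) * (2*m+2).factorial) := by
    rw [show 2*m+4 = (2*m+3)+1 by ring, Nat.factorial_succ,
        show 2*m+3 = (2*m+2)+1 by ring, Nat.factorial_succ]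
  have f2 : (m+1).factorial = (m+1) * m.factorial := Nat.factorial_succ m
  have f3 : (2*m+q+4).factorial = (2*m+q+4) * (2*m+q+3).factorial := by
    rw [show 2*m+q+4 = (2*m+q+3)+1 by ring, Nat.factorial_succ]
  rw [f1, f2, f3]
  push_cast
  have h1 : ((m.factorial : ℝ)) ≠ 0 := Nat.cast_ne_zero.2 (Nat.factorial_ne_zero m)
  have h2 : (((2*m+q+3).factorial : ℝ)) ≠ 0 := Nat.cast_ne_zero.2 (Nat.factorial_ne_zero _)
  have h3 : ((m:ℝ)+1) ≠ 0 := by positivity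
  have h4 : (2*(m:ℝ)+(q:ℝ)+4) ≠ 0 := by positivity
  field_simp

private lemma aux_aCoef_zero (K : ℕ) : aCoef (K+2) 0 = ((K:ℝ)+2) * ((K:ℝ)+1) := by
  unfold aCoef
  have e1 : 2*(K+2) - 2*0 - 2 = 2*K+2 := by omega
  have e2 : (K+2) - 0 - 2 = K := by omega
  rw [e1, e2]
  have f1 : (K+2).factorial = (K+2)*((K+1)*K.factorial) := by
    rw [show K+2 = (K+1)+1 by ring, Nat.factorial_succ, Nat.factorial_succ]
  rw [f1]
  have h1 : ((K.factorial : ℝ)) ≠ 0 := Nat.cast_ne_zero.2 (Nat.factorial_ne_zero K)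
  have h2 : (((2*K+2).factorial : ℝ)) ≠ 0 := Nat.cast_ne_zero.2 (Nat.factorial_ne_zero _)
  push_cast
  field_simp

private lemma aux_aCoef_last (K : ℕ) : aCoef (K+2) K = 2 := by
  unfold aCoef
  have e1 : 2*(K+2) - 2*K - 2 = 2 := by omega
  have e2 : (K+2) - K - 2 = 0 := by omega
  have e3 : 2*(K+2) - K - 2 = K+2 := by omega
  rw [e1, e2, e3]
  have h2 : (((K+2).factorial : ℝ)) ≠ 0 := Nat.cast_ne_zero.2 (Nat.factorial_ne_zero _)
  rw [show Nat.factorial 2 = 2 from rfl, show Nat.factorial 0 = 1 from rfl]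
  push_cast
  field_simp

private lemma aux_aCoef_penult (K : ℕ) : aCoef (K+3) K = 24 / ((K:ℝ)+4) := by
  unfold aCoef
  have e1 : 2*(K+3) - 2*K - 2 = 4 := by omega
  have e2 : (K+3) - K - 2 = 1 := by omega
  have e3 : 2*(K+3) - K - 2 = K+4 := by omega
  rw [e1, e2, e3]
  have f1 : (K+4).factorial = (K+4)*(K+3).factorial := by
    rw [show K+4 = (K+3)+1 by ring, Nat.factorial_succ]
  rw [f1, show Nat.factorial 4 = 24 from rfl, show Nat.factorial 1 = 1 from rfl]
  have h1 : (((K+3).factorial : ℝ)) ≠ 0 := Nat.cast_ne_zero.2 (Nat.factorial_ne_zero _)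
  have h4 : ((K:ℝ)+4) ≠ 0 := by positivity
  push_cast
  field_simp

private lemma aux_step_le (q m : ℕ) (c : ℝ)
    (h : (((m+1)*(2*m+q+4) : ℕ) : ℝ) ≤ c * (((2*m+4)*(2*m+3) : ℕ) : ℝ)) :
    aCoef (q+m+3) (q+1) ≤ c * aCoef (q+m+3) q := by
  have hrec := aux_aCoef_rec q m
  have hD : (0:ℝ) < (((2*m+4)*(2*m+3) : ℕ) : ℝ) := by positivity
  have ha := (aux_aCoef_pos (q+m+3) q).le
  have h2 : aCoef (q+m+3) (q+1) * (((2*m+4)*(2*m+3) : ℕ) : ℝ)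
      ≤ (c * aCoef (q+m+3) q) * (((2*m+4)*(2*m+3) : ℕ) : ℝ) := by
    rw [hrec]
    calc aCoef (q+m+3) q * (((m+1)*(2*m+q+4) : ℕ) : ℝ)
        ≤ aCoef (q+m+3) q * (c * (((2*m+4)*(2*m+3) : ℕ) : ℝ)) :=
          mul_le_mul_of_nonneg_left h ha
      _ = (c * aCoef (q+m+3) q) * (((2*m+4)*(2*m+3) : ℕ) : ℝ) := by ring
  exact le_of_mul_le_mul_right h2 hD

private lemma aux_step_mono (q m : ℕ)
    (h : (2*m+4)*(2*m+3) ≤ (m+1)*(2*m+q+4)) :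
    aCoef (q+m+3) q ≤ aCoef (q+m+3) (q+1) := by
  have hrec := aux_aCoef_rec q m
  have hD : (0:ℝ) < (((2*m+4)*(2*m+3) : ℕ) : ℝ) := by positivity
  have ha := (aux_aCoef_pos (q+m+3) q).le
  have hc : ((((2*m+4)*(2*m+3) : ℕ)) : ℝ) ≤ (((m+1)*(2*m+q+4) : ℕ) : ℝ) := Nat.cast_le.2 h
  have h2 : aCoef (q+m+3) q * (((2*m+4)*(2*m+3) : ℕ) : ℝ)
      ≤ aCoef (q+m+3) q * (((m+1)*(2*m+q+4) : ℕ) : ℝ) := mul_le_mul_of_nonneg_left hc ha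
  rw [← hrec] at h2
  exact le_of_mul_le_mul_right h2 hD

private lemma aux_prop (q k : ℕ)
    (h : (2*(k+1)+4)*(2*(k+1)+3) ≤ ((k+1)+1)*(2*(k+1)+q+4)) :
    (2*k+4)*(2*k+3) ≤ (k+1)*(2*k+(q+1)+4) := by
  have h8 : 2*k+8 ≤ q := by nlinarith
  nlinarith

private lemma aux_keyNat (q Q m : ℕ) (hq : q ≤ Q) (hQ : Q*Q ≤ 2*(m+1)) :
    2*Q*((m+1)*(2*m+q+4)) ≤ (Q+1)*((2*m+4)*(2*m+3)) := by
  nlinarith [Nat.mul_le_mul_left (2*(m+1)) hq, Nat.mul_le_mul_left (2*(m+1)) hQ]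

private lemma aux_tail : ∀ k q : ℕ, (2*k+4)*(2*k+3) ≤ (k+1)*(2*k+q+4) →
    aCoef (q+k+3) q ≤ 24 / ((q:ℝ)+(k:ℝ)+4) := by
  intro k
  induction k with
  | zero =>
    intro q _
    have h := aux_aCoef_penult q
    rw [show q+0+3 = q+3 from by ring, h]
    norm_num
  | succ k ih =>
    intro q h
    have h' : (2*k+4)*(2*k+3) ≤ (k+1)*(2*k+(q+1)+4) := aux_prop q k h
    have hmono : aCoef (q+(k+1)+3) q ≤ aCoef (q+(k+1)+3) (q+1) := aux_step_mono q (k+1) h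
    have h2 := ih (q+1) h'
    rw [show (q+1)+k+3 = q+(k+1)+3 from by ring] at h2
    have h3 : 24 / (((q:ℝ)+1)+(k:ℝ)+4) = 24 / ((q:ℝ)+((k:ℕ)+1:ℝ)+4) := by ring_nf
    push_cast at h2 ⊢
    linarith

set_option maxRecDepth 8000 in
set_option maxHeartbeats 1000000 in
private lemma aux_conds (L : ℕ) (hL : 2^99 ≤ L) :
    199 ≤ q0 L ∧ (q0 L)*(q0 L) + 2*(q0 L) + 4 ≤ 2*L ∧ 2*(L:ℝ)^2 ≤ 2^(q0 L) := by
  have hL0 : (0:ℝ) < L := by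
    have : (0:ℕ) < L := lt_of_lt_of_le (by positivity) hL
    exact_mod_cast this
  have hL1 : (1:ℝ) ≤ L := by
    have : (1:ℕ) ≤ L := le_trans (by norm_num) hL
    exact_mod_cast this
  have hLbig : ((2:ℝ))^(99:ℕ) ≤ L := by exact_mod_cast hL
  have hlog2 : (0.6931:ℝ) < Real.log 2 := by
    have := Real.log_two_gt_d9; linarith
  have hlog2' : Real.log 2 ≤ 1 := by
    have := Real.log_two_lt_d9; linarith
  have hlogL : Real.log ((L:ℝ)^2) = 2 * Real.log L := by
    rw [Real.log_pow]; push_cast; ring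
  have hy0 : 0 ≤ Real.log L := Real.log_nonneg hL1
  have hlogLlb : 99 * Real.log 2 ≤ Real.log L := by
    calc 99 * Real.log 2 = Real.log ((2:ℝ)^(99:ℕ)) := by rw [Real.log_pow]; push_cast; ring
    _ ≤ Real.log L := Real.log_le_log (by positivity) hLbig
  have hq0x : q0 L = ⌈2 * Real.log L / Real.log 2 + 1⌉₊ := by unfold q0; rw [hlogL]
  have hdiv : (198:ℝ) ≤ 2 * Real.log L / Real.log 2 := by
    rw [le_div_iff₀ (by linarith)]
    linarith
  have hx0 : (0:ℝ) ≤ 2 * Real.log L / Real.log 2 + 1 := by linarith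
  have hQlb : 199 ≤ q0 L := by
    rw [hq0x]
    have h1 : ((198:ℕ):ℝ) < 2 * Real.log L / Real.log 2 + 1 := by push_cast; linarith
    have := Nat.lt_ceil.2 h1
    omega
  have hQub : (q0 L : ℝ) ≤ 2 * Real.log L / Real.log 2 + 2 := by
    have h1 : (⌈2 * Real.log L / Real.log 2 + 1⌉₊ : ℝ) < 2 * Real.log L / Real.log 2 + 1 + 1 :=
      Nat.ceil_lt_add_one hx0
    rw [hq0x]
    linarith
  have hQub2 : (q0 L : ℝ) ≤ 2.9 * Real.log L + 2 := by
    have h2 : 2 * Real.log L / Real.log 2 ≤ 2.9 * Real.log L := by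
      rw [div_le_iff₀ (by linarith)]
      nlinarith
    linarith
  set t := (L:ℝ) ^ ((1:ℝ)/4) with ht
  set s := Real.sqrt L with hs
  have ht0 : (0:ℝ) < t := Real.rpow_pos_of_pos hL0 _
  have ht1 : (1:ℝ) ≤ t := Real.one_le_rpow hL1 (by norm_num)
  have hts : t * t = s := by
    rw [ht, hs, ← Real.rpow_add hL0, Real.sqrt_eq_rpow]
    norm_num
  have hss : s * s = L := Real.mul_self_sqrt hL0.le
  have hlogt : Real.log L ≤ 4 * t := by
    have h1 : Real.log t = (1/4) * Real.log L := Real.log_rpow hL0 _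
    have h2 : Real.log t ≤ t - 1 := Real.log_le_sub_one_of_pos ht0
    linarith
  have hs109 : (109:ℝ) ≤ s := by
    have h1 : (109:ℝ)*109 ≤ s * s := by
      rw [hss]
      have h2 : (109:ℝ)*109 ≤ 2^(99:ℕ) := by norm_num
      linarith
    nlinarith [Real.sqrt_nonneg (L:ℝ)]
  have hts' : t ≤ s := by nlinarith [mul_nonneg ht0.le (sub_nonneg.2 ht1)]
  have hQt : (q0 L : ℝ) ≤ 13.6 * t := by linarith
  have hQ2 : (q0 L : ℝ) * (q0 L) ≤ 184.96 * s := by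
    nlinarith [mul_le_mul hQt hQt (Nat.cast_nonneg (q0 L) : (0:ℝ) ≤ (q0 L:ℝ))
      (by positivity : (0:ℝ) ≤ 13.6*t)]
  have h109s : 109 * s ≤ s * s :=
    mul_le_mul_of_nonneg_right hs109 (by linarith)
  have hmain : (q0 L : ℝ) * (q0 L) + 2*(q0 L) + 4 ≤ 2*L := by
    have hLs : (L:ℝ) = s * s := hss.symm
    rw [hLs]
    linarith
  refine ⟨hQlb, ?_, ?_⟩
  · exact_mod_cast hmain
  · have hxQ : 2 * Real.log L / Real.log 2 + 1 ≤ (q0 L : ℝ) := by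
      rw [hq0x]; exact Nat.le_ceil _
    have h2 : (2:ℝ)^(q0 L) = Real.exp ((q0 L) * Real.log 2) := by
      rw [Real.exp_nat_mul, Real.exp_log (by norm_num : (0:ℝ) < 2)]
    rw [h2]
    have h3 : 2*(L:ℝ)^2 = Real.exp (Real.log 2 + 2 * Real.log L) := by
      rw [Real.exp_add, Real.exp_log (by norm_num : (0:ℝ) < 2)]
      rw [show (2:ℝ) * Real.log L = Real.log ((L:ℝ)^2) by rw [hlogL]]
      rw [Real.exp_log (by positivity)]
    rw [h3]
    apply Real.exp_le_exp.2
    have hne : Real.log 2 ≠ 0 := by linarith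
    have h4 : (2 * Real.log L / Real.log 2 + 1) * Real.log 2 ≤ (q0 L : ℝ) * Real.log 2 :=
      mul_le_mul_of_nonneg_right hxQ (by linarith)
    have h5 : (2 * Real.log L / Real.log 2 + 1) * Real.log 2 = 2 * Real.log L + Real.log 2 := by
      rw [add_mul, div_mul_cancel₀ _ hne, one_mul]
    linarith

set_option maxHeartbeats 1600000

/-- for `L` large enough, `a(L,q) ≤ L²·1.99^{−q}` for `q ≤ q₀(L)` and
`a(L,q) ≤ 2` for `q₀(L) ≤ q ≤ L−2`. -/
theorem aCoef_bounds :
    ∃ L0 : ℕ, ∀ L : ℕ, L0 ≤ L →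
      (∀ q : ℕ, q ≤ q0 L → aCoef L q ≤ (L : ℝ) ^ 2 * (1.99 : ℝ) ^ (-(q : ℤ))) ∧
      (∀ q : ℕ, q0 L ≤ q → q ≤ L - 2 → aCoef L q ≤ 2) := by
  refine ⟨2^99, fun L hL => ?_⟩
  obtain ⟨hQ199, hQsq, hQpow⟩ := aux_conds L hL
  set Q := q0 L with hQdef
  have hQQ : 199 * Q ≤ Q * Q := Nat.mul_le_mul_right Q hQ199
  have h2L : 201 * Q + 4 ≤ 2 * L := by linarith
  have hQL : Q + 3 ≤ L := by omega
  have hQR : (199:ℝ) ≤ (Q:ℝ) := by exact_mod_cast hQ199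
  have h2Q : (0:ℝ) < 2 * Q := by linarith
  set c : ℝ := ((Q:ℝ)+1) / (2*(Q:ℝ)) with hc
  have hc0 : 0 ≤ c := by positivity
  -- main induction for part (i)
  have key : ∀ q, q ≤ Q → aCoef L q ≤ (L:ℝ)^2 * c^q := by
    intro q
    induction q with
    | zero =>
      intro _
      obtain ⟨K, rfl⟩ : ∃ K, L = K + 2 := ⟨L - 2, by omega⟩
      rw [aux_aCoef_zero, pow_zero, mul_one]
      push_cast
      rw [sq]
      have hK : (0:ℝ) ≤ (K:ℝ)+2 := by positivity
      have : ((K:ℝ)+1) ≤ ((K:ℝ)+2) := by linarith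
      calc ((K:ℝ)+2) * ((K:ℝ)+1) ≤ ((K:ℝ)+2) * ((K:ℝ)+2) :=
            mul_le_mul_of_nonneg_left this hK
        _ = ((K:ℝ)+2) * ((K:ℝ)+2) := rfl
    | succ q ihq =>
      intro hq1
      have hq : q ≤ Q := by omega
      have ih := ihq hq
      obtain ⟨m, rfl⟩ : ∃ m, L = q + m + 3 := ⟨L - q - 3, by omega⟩
      have hQm : Q * Q ≤ 2 * (m + 1) := by linarith
      have hnat := aux_keyNat q Q m hq hQm
      have hcast : (((m+1)*(2*m+q+4) : ℕ) : ℝ) ≤ c * (((2*m+4)*(2*m+3) : ℕ) : ℝ) := by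
        have h2 : ((2*Q*((m+1)*(2*m+q+4)) : ℕ) : ℝ) ≤ (((Q+1)*((2*m+4)*(2*m+3)) : ℕ) : ℝ) :=
          Nat.cast_le.2 hnat
        rw [hc, div_mul_eq_mul_div, le_div_iff₀ h2Q]
        push_cast at h2 ⊢
        linarith
      have hstep := aux_step_le q m c hcast
      calc aCoef (q+m+3) (q+1) ≤ c * aCoef (q+m+3) q := hstep
        _ ≤ c * ((((q:ℕ)+m+3 : ℕ):ℝ)^2 * c^q) := by
            apply mul_le_mul_of_nonneg_left _ hc0
            exact_mod_cast ih
        _ = (((q:ℕ)+m+3 : ℕ):ℝ)^2 * c^(q+1) := by ring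
  constructor
  · -- part (i)
    intro q hq
    have h1 := key q hq
    have hc199 : c ≤ 1/1.99 := by
      rw [hc, div_le_div_iff₀ h2Q (by norm_num)]
      linarith
    have h2 : c^q ≤ (1/1.99)^q := pow_le_pow_left₀ hc0 hc199 q
    have h3 : (1.99:ℝ) ^ (-(q:ℤ)) = (1/1.99:ℝ)^q := by
      rw [zpow_neg, zpow_natCast, ← inv_pow, one_div]
    rw [h3]
    calc aCoef L q ≤ (L:ℝ)^2 * c^q := h1
      _ ≤ (L:ℝ)^2 * (1/1.99)^q := by
          apply mul_le_mul_of_nonneg_left h2 (by positivity)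
  · -- part (ii)
    have hQne : (Q:ℝ) ≠ 0 := by linarith
    have hbase : aCoef L Q ≤ 2 := by
      have h1 := key Q le_rfl
      have hcexp : c ≤ Real.exp (1/(Q:ℝ)) / 2 := by
        have h2 : 1/(Q:ℝ) + 1 ≤ Real.exp (1/(Q:ℝ)) := Real.add_one_le_exp _
        rw [hc, div_le_div_iff₀ h2Q (by norm_num : (0:ℝ) < 2)]
        have h3 : ((Q:ℝ)+1) * 2 = 2*(Q:ℝ)*(1/(Q:ℝ) + 1) := by
          field_simp
          ring
        rw [h3]
        have h2' := mul_le_mul_of_nonneg_left h2 h2Q.le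
        linarith
      have hcQ : c^Q ≤ 3 / 2^Q := by
        have h4 : c^Q ≤ (Real.exp (1/(Q:ℝ)) / 2)^Q := pow_le_pow_left₀ hc0 hcexp Q
        have h5 : (Real.exp (1/(Q:ℝ)) / 2)^Q = Real.exp ((Q:ℝ) * (1/(Q:ℝ))) / 2^Q := by
          rw [div_pow, Real.exp_nat_mul]
        have h6 : (Q:ℝ) * (1/(Q:ℝ)) = 1 := by field_simp
        rw [h5, h6] at h4
        have h7 : Real.exp 1 ≤ 3 := by
          have := Real.exp_one_lt_d9; linarith
        have h8 : (0:ℝ) < 2^Q := by positivity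
        calc c^Q ≤ Real.exp 1 / 2^Q := h4
          _ ≤ 3 / 2^Q := (div_le_div_iff_of_pos_right h8).2 h7
      have hL2 : (0:ℝ) < (L:ℝ)^2 := by
        have : (0:ℕ) < L := by omega
        have : (0:ℝ) < L := by exact_mod_cast this
        positivity
      have h8 : (0:ℝ) < 2^Q := by positivity
      have h9 : (L:ℝ)^2 * (3/2^Q) ≤ 3/2 := by
        rw [show (L:ℝ)^2 * (3/2^Q) = 3*(L:ℝ)^2 / 2^Q from by ring,
            div_le_div_iff₀ h8 (by norm_num : (0:ℝ) < 2)]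
        linarith
      calc aCoef L Q ≤ (L:ℝ)^2 * c^Q := h1
        _ ≤ (L:ℝ)^2 * (3/2^Q) := mul_le_mul_of_nonneg_left hcQ (by positivity)
        _ ≤ 3/2 := h9
        _ ≤ 2 := by norm_num
    have hii : ∀ j, Q + j ≤ L - 2 → aCoef L (Q + j) ≤ 2 := by
      intro j
      induction j with
      | zero => intro _; simpa using hbase
      | succ j ihj =>
        intro hj1
        show aCoef L (Q+j+1) ≤ 2
        have ih := ihj (by omega)
        by_cases hql : Q + j + 1 = L - 2
        · obtain ⟨K, rfl⟩ : ∃ K, L = K + 2 := ⟨L - 2, by omega⟩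
          rw [show Q + j + 1 = K from by omega, aux_aCoef_last]
        · have hle : Q + j + 4 ≤ L := by omega
          obtain ⟨k, hk⟩ : ∃ k, L = (Q + j) + (k+1) + 3 := ⟨L - (Q+j) - 4, by omega⟩
          by_cases hcase : (2*(k+1)+4)*(2*(k+1)+3) ≤ ((k+1)+1)*(2*(k+1)+(Q+j)+4)
          · -- increasing from here: use the tail bound
            have hprop := aux_prop (Q+j) k hcase
            have htail := aux_tail k (Q+j+1) hprop
            rw [show (Q+j+1)+k+3 = (Q+j)+(k+1)+3 from by ring, ← hk] at htail
            have hnum : 24 / (((Q+j+1:ℕ):ℝ)+(k:ℝ)+4) ≤ 2 := by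
              rw [div_le_iff₀ (by push_cast; positivity)]
              push_cast
              have : (199:ℝ) ≤ ((Q:ℕ):ℝ) := by exact_mod_cast hQ199
              linarith [(Nat.cast_nonneg j : (0:ℝ) ≤ (j:ℝ)), (Nat.cast_nonneg k : (0:ℝ) ≤ (k:ℝ))]
            calc aCoef L (Q+j+1) ≤ 24 / (((Q+j+1:ℕ):ℝ)+(k:ℝ)+4) := by
                  push_cast at htail ⊢; linarith
              _ ≤ 2 := hnum
          · -- decreasing step
            push_neg at hcase
            have hanti : ((((k+1)+1)*(2*(k+1)+(Q+j)+4) : ℕ) : ℝ)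
                ≤ 1 * (((2*(k+1)+4)*(2*(k+1)+3) : ℕ) : ℝ) := by
              rw [one_mul]
              exact_mod_cast hcase.le
            have := aux_step_le (Q+j) (k+1) 1 hanti
            rw [← hk, one_mul] at this
            linarith
    intro q hq hq2
    obtain ⟨j, rfl⟩ : ∃ j, q = Q + j := ⟨q - Q, by omega⟩
    exact hii j hq2

end
end

section
/- There exists a constant M > 0 such that for every integer k ≥ 0 and every z > −1 one has 0 ≤ 1/(1+z) − F_k(z) ≤ M · z² / ( 2^k · (1+z)³ ). In particular F_k(z) ≤ 1/(1+z) for all z > −1 and all k ≥ 0. -/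
open MeasureTheory Real Filter Topology ProbabilityTheory

noncomputable section

section FseqAux

open intervalIntegral

lemma base_lower {z : ℝ} (hz : -1 < z) : Real.exp (-z) ≤ 1/(1+z) := by
  have h1 : 0 < 1 + z := by linarith
  have h2 : 1 + z ≤ Real.exp z := by have := Real.add_one_le_exp z; linarith
  rw [Real.exp_neg]
  rw [inv_eq_one_div]
  exact one_div_le_one_div_of_le h1 h2

lemma base_upper {z : ℝ} (hz : -1 < z) :
    1/(1+z) - Real.exp (-z) ≤ 2*z^2/((1+z)^3) := by
  have h1 : 0 < 1 + z := by linarith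
  have hu3 : (0:ℝ) < (1+z)^3 := by positivity
  have key : 1 + 2*z - z^2 ≤ (1+z)^3 * Real.exp (-z) := by
    rcases le_or_gt 3 z with h3 | h3
    · have : 0 ≤ (1+z)^3 * Real.exp (-z) := by positivity
      nlinarith
    · have ha : (1:ℝ) - z/3 ≤ Real.exp (-(z/3)) := by
        have := Real.add_one_le_exp (-(z/3)); linarith
      have hb : (0:ℝ) ≤ 1 - z/3 := by linarith
      have hc : ((1:ℝ) - z/3)^3 ≤ (Real.exp (-(z/3)))^3 := by
        exact pow_le_pow_left₀ hb ha 3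
      have hd : (Real.exp (-(z/3)))^3 = Real.exp (-z) := by
        rw [← Real.exp_nat_mul]; norm_num; ring_nf
      rw [hd] at hc
      have he : (1+z)^3 * ((1:ℝ) - z/3)^3 - (1 + 2*z - z^2)
          = (2*z - z^2)^2 * (9 + 2*z - z^2) / 27 := by ring
      have hf : 0 ≤ 9 + 2*z - z^2 := by nlinarith
      nlinarith [mul_le_mul_of_nonneg_left hc (le_of_lt hu3),
        mul_nonneg (sq_nonneg (2*z - z^2)) hf]
  have goal2 : (1/(1+z) - Real.exp (-z)) * (1+z)^3 ≤ 2*z^2 := by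
    have he : (1/(1+z) - Real.exp (-z)) * (1+z)^3
        = (1+z)^2 - (1+z)^3 * Real.exp (-z) := by field_simp
    rw [he]; nlinarith
  calc 1/(1+z) - Real.exp (-z)
      = ((1/(1+z) - Real.exp (-z)) * (1+z)^3)/(1+z)^3 := by field_simp
    _ ≤ 2*z^2/((1+z)^3) := (div_le_div_iff_of_pos_right hu3).mpr goal2

lemma my_uIcc_sub {z : ℝ} (hz : -1 < z) : Set.uIcc (0:ℝ) z ⊆ Set.Ioi (-1) := by
  intro t ht
  rw [Set.mem_uIcc] at ht
  rcases ht with ⟨h1, _⟩ | ⟨h1, _⟩ <;> simp only [Set.mem_Ioi] <;> linarith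

lemma my_one_add_pos {t : ℝ} (ht : t ∈ Set.Ioi (-1:ℝ)) : 0 < 1 + t := by
  simp only [Set.mem_Ioi] at ht; linarith

-- continuity of g_k at all points of Ioi (-1), given continuity of Fseq k and the bounds
lemma g_contOn (k : ℕ) (hFc : ContinuousOn (Fseq k) (Set.Ioi (-1:ℝ)))
    (hb : ∀ z : ℝ, -1 < z → 0 ≤ 1/(1+z) - Fseq k z ∧
      1/(1+z) - Fseq k z ≤ 2*z^2/(2^k*(1+z)^3)) :
    ContinuousOn (fun t => (1/(1+t) - Fseq k t)/t) (Set.Ioi (-1:ℝ)) := by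
  have habs : ∀ t ∈ Set.Ioi (-1:ℝ),
      |(1/(1+t) - Fseq k t)/t| ≤ 2*|t|/(2^k*(1+t)^3) := by
    intro t ht
    have ht' : -1 < t := ht
    have h1 : 0 < 1 + t := my_one_add_pos ht
    have hG := hb t ht'
    rcases eq_or_ne t 0 with rfl | hne
    · simp
    · rw [abs_div, abs_of_nonneg hG.1, div_le_iff₀ (abs_pos.mpr hne)]
      have he : 2*|t|/(2^k*(1+t)^3)*|t| = 2*t^2/(2^k*(1+t)^3) := by
        rw [div_mul_eq_mul_div, mul_assoc, ← abs_mul, ← sq, abs_sq]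
      rw [he]; exact hG.2
  intro t ht
  rcases eq_or_ne t 0 with rfl | hne
  · have hval : ((1:ℝ)/(1+(0:ℝ)) - Fseq k 0)/(0:ℝ) = 0 := by simp
    unfold ContinuousWithinAt
    have hval' : (fun t => (1/(1+t) - Fseq k t)/t) (0:ℝ) = 0 := hval
    rw [hval']
    apply squeeze_zero_norm' (a := fun t => 2*|t|/(2^k*(1+t)^3))
    · filter_upwards [self_mem_nhdsWithin] with x hx
      exact habs x hx
    · have hc : ContinuousAt (fun t : ℝ => 2*|t|/(2^k*(1+t)^3)) 0 := by
        apply ContinuousAt.div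
        · exact continuousAt_const.mul continuous_abs.continuousAt
        · fun_prop
        · positivity
      have := hc.tendsto.mono_left (nhdsWithin_le_nhds (s := Set.Ioi (-1:ℝ)))
      simpa using this
  · have hF : ContinuousAt (Fseq k) t := hFc.continuousAt (isOpen_Ioi.mem_nhds ht)
    have h1 : (1:ℝ) + t ≠ 0 := ne_of_gt (my_one_add_pos ht)
    exact (((continuousAt_const.div (continuousAt_const.add continuousAt_id) h1).sub
      hF).div continuousAt_id hne).continuousWithinAt

lemma my_log_int {z : ℝ} (hz : -1 < z) :
    ∫ t in (0:ℝ)..z, 1/(1+t) = Real.log (1+z) := by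
  have h : ∀ t ∈ Set.uIcc (0:ℝ) z, HasDerivAt (fun u => Real.log (1+u)) (1/(1+t)) t := by
    intro t ht
    have h0 : 0 < 1 + t := my_one_add_pos (my_uIcc_sub hz ht)
    have := (Real.hasDerivAt_log (ne_of_gt h0)).comp t ((hasDerivAt_id t).const_add 1)
    simpa [one_div, Function.comp_def] using this
  have hint : IntervalIntegrable (fun t => 1/(1+t)) volume 0 z := by
    apply ContinuousOn.intervalIntegrable
    apply ContinuousOn.div continuousOn_const
    · exact (continuous_const.add continuous_id).continuousOn
    · intro t ht; exact ne_of_gt (my_one_add_pos (my_uIcc_sub hz ht))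
  rw [integral_eq_sub_of_hasDerivAt h hint]
  simp

lemma my_psi_int {z : ℝ} (hz : -1 < z) :
    ∫ t in (0:ℝ)..z, 2*t/(1+t)^3 = z^2/(1+z)^2 := by
  have h : ∀ t ∈ Set.uIcc (0:ℝ) z, HasDerivAt (fun u => u^2/(1+u)^2) (2*t/(1+t)^3) t := by
    intro t ht
    have h0 : 0 < 1 + t := my_one_add_pos (my_uIcc_sub hz ht)
    have hd : HasDerivAt (fun u : ℝ => u^2/(1+u)^2)
        ((2*t*(1+t)^2 - t^2*(2*(1+t)^1*1))/((1+t)^2)^2) t := by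
      exact (HasDerivAt.div (by simpa using hasDerivAt_pow 2 t)
        (by exact HasDerivAt.fun_pow ((hasDerivAt_id t).const_add 1) 2)
        (by positivity))
    convert hd using 1
    field_simp
    ring
  have hint : IntervalIntegrable (fun t => 2*t/(1+t)^3) volume 0 z := by
    apply ContinuousOn.intervalIntegrable
    apply ContinuousOn.div (by fun_prop)
    · fun_prop
    · intro t ht
      have h0 : 0 < 1 + t := my_one_add_pos (my_uIcc_sub hz ht)
      positivity
  rw [integral_eq_sub_of_hasDerivAt h hint]
  norm_num

lemma key_induction : ∀ k : ℕ, ContinuousOn (Fseq k) (Set.Ioi (-1:ℝ)) ∧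
    ∀ z : ℝ, -1 < z → 0 ≤ 1/(1+z) - Fseq k z ∧
      1/(1+z) - Fseq k z ≤ 2*z^2/(2^k*(1+z)^3) := by
  intro k
  induction k with
  | zero =>
    constructor
    · show ContinuousOn (fun z => Real.exp (-z)) _
      fun_prop
    · intro z hz
      constructor
      · have := Real.add_one_le_exp z
        have h1 : 0 < 1 + z := by linarith
        have h2 : Real.exp (-z) ≤ 1/(1+z) := by
          rw [Real.exp_neg, inv_eq_one_div]
          exact one_div_le_one_div_of_le h1 (by linarith)
        show 0 ≤ 1/(1+z) - Real.exp (-z)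
        linarith
      · show 1/(1+z) - Real.exp (-z) ≤ 2*z^2/(2^0*(1+z)^3)
        have := base_upper hz
        rw [show (2:ℝ)^0 = 1 by norm_num, one_mul]
        exact this
  | succ k ih =>
    obtain ⟨hFc, hb⟩ := ih
    set g : ℝ → ℝ := fun t => (1/(1+t) - Fseq k t)/t with hg
    have hgc : ContinuousOn g (Set.Ioi (-1:ℝ)) := g_contOn k hFc hb
    -- interval integrability of g
    have hgint : ∀ {a b : ℝ}, -1 < a → -1 < b → IntervalIntegrable g volume a b := by
      intro a b ha hb'
      apply ContinuousOn.intervalIntegrable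
      apply hgc.mono
      intro t ht
      rw [Set.mem_uIcc] at ht
      rcases ht with ⟨h1, _⟩ | ⟨h1, _⟩ <;> simp only [Set.mem_Ioi] <;> linarith
    -- the rewrite of Fseq (k+1)
    have hFk1 : ∀ z : ℝ, -1 < z →
        Fseq (k+1) z = 1/(1+z) * Real.exp (-(∫ t in (0:ℝ)..z, g t)) := by
      intro z hz
      have h1 : 0 < 1 + z := by linarith
      have hsplit : (∫ t in (0:ℝ)..z, (1 - Fseq k t)/t)
          = ∫ t in (0:ℝ)..z, (1/(1+t) + g t) := by
        apply intervalIntegral.integral_congr_ae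
        have h0 : ∀ᵐ x : ℝ, x ≠ (0:ℝ) := by
          rw [ae_iff]
          have : {x : ℝ | ¬ x ≠ 0} = {0} := by ext x; simp
          rw [this]
          exact Real.volume_singleton
        filter_upwards [h0] with x hx hxI
        have hx1 : 0 < 1 + x := by
          rw [Set.mem_uIoc] at hxI
          rcases hxI with ⟨h1', _⟩ | ⟨h1', _⟩ <;> linarith
        simp only [hg]
        field_simp
        ring
      have hintlog : IntervalIntegrable (fun t => 1/(1+t)) volume 0 z := by
        apply ContinuousOn.intervalIntegrable
        apply ContinuousOn.div continuousOn_const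
        · exact (continuous_const.add continuous_id).continuousOn
        · intro t ht; exact ne_of_gt (my_one_add_pos (my_uIcc_sub hz ht))
      have : Fseq (k+1) z = Real.exp (-(∫ t in (0:ℝ)..z, (1 - Fseq k t)/t)) := rfl
      rw [this, hsplit, integral_add hintlog (hgint (by norm_num) hz), my_log_int hz,
        neg_add, Real.exp_add, Real.exp_neg, Real.exp_log h1, inv_eq_one_div]
    constructor
    · -- continuity of Fseq (k+1) on Ioi (-1)
      have hP : ContinuousOn (fun z => ∫ t in (0:ℝ)..z, g t) (Set.Ioi (-1:ℝ)) := by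
        intro z hz
        have hd : HasDerivAt (fun u => ∫ t in (0:ℝ)..u, g t) (g z) z := by
          apply integral_hasDerivAt_right (hgint (by norm_num) hz)
          · exact ContinuousOn.stronglyMeasurableAtFilter isOpen_Ioi hgc z hz
          · exact hgc.continuousAt (isOpen_Ioi.mem_nhds hz)
        exact hd.continuousAt.continuousWithinAt
      have hform : ContinuousOn
          (fun z => 1/(1+z) * Real.exp (-(∫ t in (0:ℝ)..z, g t))) (Set.Ioi (-1:ℝ)) := by
        apply ContinuousOn.mul
        · apply ContinuousOn.div continuousOn_const
          · exact (continuous_const.add continuous_id).continuousOn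
          · intro t ht; exact ne_of_gt (my_one_add_pos ht)
        · exact (Real.continuous_exp.comp_continuousOn hP.neg)
      exact hform.congr (fun z hz => hFk1 z hz)
    · intro z hz
      have h1 : 0 < 1 + z := by linarith
      set I : ℝ := ∫ t in (0:ℝ)..z, g t with hI
      -- I ≥ 0
      have hI0 : 0 ≤ I := by
        rcases le_or_gt 0 z with h0z | h0z
        · apply intervalIntegral.integral_nonneg h0z
          intro t ht
          exact div_nonneg (hb t (by linarith [ht.1])).1 ht.1
        · have hle : (∫ t in z..(0:ℝ), g t) ≤ ∫ t in z..(0:ℝ), (0:ℝ) := by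
            apply integral_mono_on (le_of_lt h0z) (hgint hz (by norm_num))
              intervalIntegrable_const
            intro t ht
            exact div_nonpos_of_nonneg_of_nonpos (hb t (by linarith [ht.1])).1 ht.2
          have h00 : (∫ t in z..(0:ℝ), (0:ℝ)) = 0 := intervalIntegral.integral_zero
          have e1 : (∫ t in (0:ℝ)..z, g t) = -∫ t in z..(0:ℝ), g t :=
            intervalIntegral.integral_symm z 0
          rw [hI]
          linarith
      -- I ≤ z^2/(2^k (1+z)^2)
      have hIψ : I ≤ z^2/(2^k*(1+z)^2) := by
        have hψint : IntervalIntegrable (fun t => 2*t/(2^k*(1+t)^3)) volume 0 z := by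
          apply ContinuousOn.intervalIntegrable
          apply ContinuousOn.div (by fun_prop) (by fun_prop)
          intro t ht
          have := my_one_add_pos (my_uIcc_sub hz ht)
          positivity
        have hmono : I ≤ ∫ t in (0:ℝ)..z, 2*t/(2^k*(1+t)^3) := by
          rcases le_or_gt 0 z with h0z | h0z
          · apply integral_mono_on h0z (hgint (by norm_num) hz) hψint
            intro t ht
            have ht1 : -1 < t := by linarith [ht.1]
            rcases eq_or_lt_of_le ht.1 with rfl | htpos
            · simp [hg]
            · rw [hg]
              rw [div_le_div_iff₀ htpos (by positivity : (0:ℝ) < 2^k*(1+t)^3)]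
              calc (1/(1+t) - Fseq k t) * (2^k*(1+t)^3)
                  ≤ 2*t^2/(2^k*(1+t)^3) * (2^k*(1+t)^3) := by
                    apply mul_le_mul_of_nonneg_right (hb t ht1).2 (by positivity)
                _ = 2*t^2 := by field_simp
                _ = 2*t*t := by ring
          · have hle : (∫ t in z..(0:ℝ), (fun t => 2*t/(2^k*(1+t)^3)) t)
                ≤ ∫ t in z..(0:ℝ), g t := by
              apply integral_mono_on (le_of_lt h0z) (hψint.symm) (hgint hz (by norm_num))
              intro t ht
              have ht1 : -1 < t := by linarith [ht.1]
              rcases eq_or_lt_of_le ht.2 with heq0 | htneg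
              · rw [heq0]; simp [hg]
              · simp only [hg, le_div_iff_of_neg htneg]
                calc (1/(1+t) - Fseq k t)
                    ≤ 2*t^2/(2^k*(1+t)^3) := (hb t ht1).2
                  _ = 2*t/(2^k*(1+t)^3)*t := by field_simp
            have e1 : (∫ t in (0:ℝ)..z, g t) = -∫ t in z..(0:ℝ), g t :=
              intervalIntegral.integral_symm z 0
            have e2 : (∫ t in (0:ℝ)..z, 2*t/(2^k*(1+t)^3))
                = -∫ t in z..(0:ℝ), 2*t/(2^k*(1+t)^3) :=
              intervalIntegral.integral_symm z 0
            rw [hI]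
            simp only at hle
            linarith
        have hψval : (∫ t in (0:ℝ)..z, 2*t/(2^k*(1+t)^3)) = z^2/(2^k*(1+z)^2) := by
          have he : (fun t : ℝ => 2*t/((2:ℝ)^k*(1+t)^3))
              = fun t : ℝ => ((2:ℝ)^k)⁻¹ * (2*t/(1+t)^3) := by
            funext t; rw [div_mul_eq_div_div_swap, div_eq_inv_mul]
          rw [he, intervalIntegral.integral_const_mul, my_psi_int hz]
          field_simp
        rw [← hψval]; exact hmono
      -- conclusion
      rw [hFk1 z hz]
      have hexp1 : Real.exp (-I) ≤ 1 := Real.exp_le_one_iff.mpr (by linarith)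
      have hexp2 : 1 - I ≤ Real.exp (-I) := by
        have := Real.add_one_le_exp (-I); linarith
      have h1z : 0 < 1/(1+z) := by positivity
      constructor
      · have : 1/(1+z)*Real.exp (-I) ≤ 1/(1+z)*1 :=
          mul_le_mul_of_nonneg_left hexp1 (le_of_lt h1z)
        linarith
      · have hstep : 1/(1+z) - 1/(1+z)*Real.exp (-I) ≤ 1/(1+z)*I := by
          have := mul_le_mul_of_nonneg_left hexp2 (le_of_lt h1z)
          nlinarith
        have hstep2 : 1/(1+z)*I ≤ 1/(1+z)*(z^2/(2^k*(1+z)^2)) :=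
          mul_le_mul_of_nonneg_left hIψ (le_of_lt h1z)
        have heq : 1/(1+z)*(z^2/(2^k*(1+z)^2)) = 2*z^2/(2^(k+1)*(1+z)^3) := by
          rw [pow_succ]
          field_simp
          ring
        linarith

end FseqAux

/-- there is `M > 0` with
`0 ≤ 1/(1+z) − F_k(z) ≤ M·z²/(2^k·(1+z)³)` for all `k ≥ 0` and `z > −1`. -/
theorem Fseq_bounds :
    ∃ M : ℝ, 0 < M ∧ ∀ k : ℕ, ∀ z : ℝ, -1 < z →
      0 ≤ 1 / (1 + z) - Fseq k z ∧
      1 / (1 + z) - Fseq k z ≤ M * z ^ 2 / (2 ^ k * (1 + z) ^ 3) := by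
  refine ⟨2, by norm_num, ?_⟩
  intro k z hz
  obtain ⟨-, hbd⟩ := key_induction k
  exact hbd z hz

end
end
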